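/- arXiv:1107.2460 — 4 statements merged into one kernel-verified Lean document; each statement's English description precedes it below -/
import Mathlib

section
/- Let n ≥ 2, γ > -1, p > 0, and K > 0 with pK > γ + 1. Then there exists a constant C > 0 such that for every y in the open unit ball of ℝⁿ and every unit vector x' ∈ ℝⁿ, ∫₀¹ (1-r)^γ / |x' - r y|^{pK} dr ≤ C |x' - y|^{γ + 1 - pK}. -/
open MeasureTheory Set
open intervalIntegral

-- interval integrability of s ↦ s^γ (s+d)^{-q} on [0,1]
lemma auxII (γ q d : ℝ) (hγ : -1 < γ) (hq : 0 < q) (hd : 0 < d) :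
    IntervalIntegrable (fun s => s ^ γ * (s + d) ^ (-q)) MeasureTheory.volume 0 1 := by
  rw [intervalIntegrable_iff_integrableOn_Ioo_of_le (by norm_num)]
  have hg : IntegrableOn (fun s : ℝ => d ^ (-q) * s ^ γ) (Ioo 0 1) := by
    have := (intervalIntegrable_rpow' (a := 0) (b := 1) hγ).const_mul (d ^ (-q))
    rwa [intervalIntegrable_iff_integrableOn_Ioo_of_le (by norm_num)] at this
  refine MeasureTheory.Integrable.mono hg ?_ ?_
  · apply Measurable.aestronglyMeasurable
    fun_prop
  · rw [MeasureTheory.ae_restrict_iff' measurableSet_Ioo]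
    filter_upwards with s hs
    have hs0 : 0 < s := hs.1
    have h1 : (0:ℝ) ≤ s ^ γ := Real.rpow_nonneg hs0.le _
    have h2 : (s + d) ^ (-q) ≤ d ^ (-q) :=
      Real.rpow_le_rpow_of_nonpos hd (by linarith) (by linarith)
    have h3 : (0:ℝ) ≤ (s + d) ^ (-q) := Real.rpow_nonneg (by linarith) _
    rw [Real.norm_eq_abs, Real.norm_eq_abs, abs_of_nonneg (mul_nonneg h1 h3),
      abs_of_nonneg (mul_nonneg (Real.rpow_nonneg hd.le _) h1)]
    rw [mul_comm (d ^ (-q))]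
    exact mul_le_mul_of_nonneg_left h2 h1

lemma auxBound (γ q d : ℝ) (hγ : -1 < γ) (hq : γ + 1 < q) (hd : 0 < d) :
    ∫ r in Ioo (0:ℝ) 1, (1 - r) ^ γ * ((1 - r) + d) ^ (-q)
      ≤ (1 / (γ + 1) + 1 / (q - (γ + 1))) * d ^ (γ + 1 - q) := by
  have hq0 : 0 < q := by linarith
  have hII : IntervalIntegrable (fun s => s ^ γ * (s + d) ^ (-q)) volume 0 1 :=
    auxII γ q d hγ hq0 hd
  have hγ1 : (0:ℝ) < γ + 1 := by linarith
  have hqγ : (0:ℝ) < q - (γ + 1) := by linarith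
  have hdpow : (0:ℝ) < d ^ (γ + 1 - q) := Real.rpow_pos_of_pos hd _
  -- change of variables r ↦ 1 - r
  have step1 : ∫ r in Ioo (0:ℝ) 1, (1 - r) ^ γ * ((1 - r) + d) ^ (-q)
      = ∫ s in (0:ℝ)..1, s ^ γ * (s + d) ^ (-q) := by
    rw [← MeasureTheory.integral_Ioc_eq_integral_Ioo,
      ← intervalIntegral.integral_of_le (by norm_num : (0:ℝ) ≤ 1)]
    have := intervalIntegral.integral_comp_sub_left
      (a := 0) (b := 1) (fun s => s ^ γ * (s + d) ^ (-q)) 1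
    simpa using this
  rw [step1]
  rcases le_or_gt 1 d with hd1 | hd1
  · -- d ≥ 1 : crude bound
    have hle : ∫ s in (0:ℝ)..1, s ^ γ * (s + d) ^ (-q)
        ≤ ∫ s in (0:ℝ)..1, d ^ (-q) * s ^ γ := by
      apply intervalIntegral.integral_mono_on (by norm_num) hII
        ((intervalIntegrable_rpow' hγ).const_mul _)
      intro s hs
      have hs0 : (0:ℝ) ≤ s := hs.1
      have h1 : (0:ℝ) ≤ s ^ γ := Real.rpow_nonneg hs0 _
      have h2 : (s + d) ^ (-q) ≤ d ^ (-q) :=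
        Real.rpow_le_rpow_of_nonpos hd (by linarith) (by linarith)
      calc s ^ γ * (s + d) ^ (-q) ≤ s ^ γ * d ^ (-q) :=
            mul_le_mul_of_nonneg_left h2 h1
        _ = d ^ (-q) * s ^ γ := mul_comm _ _
    have hval : ∫ s in (0:ℝ)..1, d ^ (-q) * s ^ γ = d ^ (-q) / (γ + 1) := by
      rw [intervalIntegral.integral_const_mul, integral_rpow (Or.inl hγ)]
      rw [Real.one_rpow, Real.zero_rpow (by linarith)]
      ring
    have hmono : d ^ (-q) ≤ d ^ (γ + 1 - q) :=
      Real.rpow_le_rpow_of_exponent_le hd1 (by linarith)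
    calc ∫ s in (0:ℝ)..1, s ^ γ * (s + d) ^ (-q)
        ≤ d ^ (-q) / (γ + 1) := by rw [← hval]; exact hle
      _ ≤ d ^ (γ + 1 - q) / (γ + 1) := by gcongr
      _ ≤ (1 / (γ + 1) + 1 / (q - (γ + 1))) * d ^ (γ + 1 - q) := by
          rw [div_eq_mul_one_div, mul_comm]
          apply mul_le_mul_of_nonneg_right _ hdpow.le
          have : (0:ℝ) < 1 / (q - (γ + 1)) := by positivity
          linarith
  · -- d < 1 : split at s = d
    have hsub1 : uIcc (0:ℝ) d ⊆ uIcc (0:ℝ) 1 := by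
      rw [uIcc_of_le hd.le, uIcc_of_le (by norm_num : (0:ℝ) ≤ 1)]
      exact Icc_subset_Icc le_rfl hd1.le
    have hsub2 : uIcc d (1:ℝ) ⊆ uIcc (0:ℝ) 1 := by
      rw [uIcc_of_le hd1.le, uIcc_of_le (by norm_num : (0:ℝ) ≤ 1)]
      exact Icc_subset_Icc hd.le le_rfl
    have hII1 : IntervalIntegrable (fun s => s ^ γ * (s + d) ^ (-q)) volume 0 d :=
      hII.mono_set hsub1
    have hII2 : IntervalIntegrable (fun s => s ^ γ * (s + d) ^ (-q)) volume d 1 :=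
      hII.mono_set hsub2
    rw [← intervalIntegral.integral_add_adjacent_intervals hII1 hII2]
    have hb1 : ∫ s in (0:ℝ)..d, s ^ γ * (s + d) ^ (-q)
        ≤ d ^ (γ + 1 - q) / (γ + 1) := by
      have hle : ∫ s in (0:ℝ)..d, s ^ γ * (s + d) ^ (-q)
          ≤ ∫ s in (0:ℝ)..d, d ^ (-q) * s ^ γ := by
        apply intervalIntegral.integral_mono_on hd.le hII1
          ((intervalIntegrable_rpow' hγ).const_mul _)
        intro s hs
        have h1 : (0:ℝ) ≤ s ^ γ := Real.rpow_nonneg hs.1 _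
        have h2 : (s + d) ^ (-q) ≤ d ^ (-q) :=
          Real.rpow_le_rpow_of_nonpos hd (by linarith [hs.1]) (by linarith)
        calc s ^ γ * (s + d) ^ (-q) ≤ s ^ γ * d ^ (-q) :=
              mul_le_mul_of_nonneg_left h2 h1
          _ = d ^ (-q) * s ^ γ := mul_comm _ _
      have hval : ∫ s in (0:ℝ)..d, d ^ (-q) * s ^ γ = d ^ (γ + 1 - q) / (γ + 1) := by
        have hrw : d ^ (γ + 1 - q) = d ^ (-q) * d ^ (γ + 1) := by
          rw [← Real.rpow_add hd]; ring_nf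
        rw [intervalIntegral.integral_const_mul, integral_rpow (Or.inl hγ),
          Real.zero_rpow (by linarith), hrw]
        ring
      rw [← hval]; exact hle
    have hb2 : ∫ s in d..1, s ^ γ * (s + d) ^ (-q)
        ≤ d ^ (γ + 1 - q) / (q - (γ + 1)) := by
      have h0 : (0:ℝ) ∉ uIcc d 1 := by
        rw [uIcc_of_le hd1.le]; intro h; exact absurd h.1 (not_le.2 hd)
      have hle : ∫ s in d..1, s ^ γ * (s + d) ^ (-q)
          ≤ ∫ s in d..1, s ^ (γ - q) := by
        apply intervalIntegral.integral_mono_on hd1.le hII2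
          (intervalIntegrable_rpow (Or.inr h0))
        intro s hs
        have hs0 : 0 < s := lt_of_lt_of_le hd hs.1
        have h1 : (0:ℝ) ≤ s ^ γ := Real.rpow_nonneg hs0.le _
        have h2 : (s + d) ^ (-q) ≤ s ^ (-q) :=
          Real.rpow_le_rpow_of_nonpos hs0 (by linarith) (by linarith)
        calc s ^ γ * (s + d) ^ (-q) ≤ s ^ γ * s ^ (-q) :=
              mul_le_mul_of_nonneg_left h2 h1
          _ = s ^ (γ - q) := by rw [← Real.rpow_add hs0]; ring_nf
      have hne : γ - q ≠ -1 := fun h => by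
        have : γ + 1 = q := by linarith [sub_eq_iff_eq_add.mp h]
        linarith
      have hval : ∫ s in d..1, s ^ (γ - q)
          = (1 - d ^ (γ - q + 1)) / (γ - q + 1) := by
        rw [integral_rpow (Or.inr ⟨hne, h0⟩), Real.one_rpow]
      have heq : γ - q + 1 = γ + 1 - q := by ring
      have hflip : (1 - d ^ (γ + 1 - q)) / (γ + 1 - q)
          = (d ^ (γ + 1 - q) - 1) / (q - (γ + 1)) := by
        rw [div_eq_div_iff (by linarith) (by linarith : q - (γ + 1) ≠ 0)]
        ring
      rw [hval, heq, hflip] at hle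
      refine hle.trans ?_
      gcongr
      linarith
    calc (∫ s in (0:ℝ)..d, s ^ γ * (s + d) ^ (-q)) + ∫ s in d..1, s ^ γ * (s + d) ^ (-q)
        ≤ d ^ (γ + 1 - q) / (γ + 1) + d ^ (γ + 1 - q) / (q - (γ + 1)) := add_le_add hb1 hb2
      _ = (1 / (γ + 1) + 1 / (q - (γ + 1))) * d ^ (γ + 1 - q) := by
          field_simp

theorem stmt2 (n : ℕ) (hn : 2 ≤ n) (γ p K : ℝ) (hγ : -1 < γ) (hp : 0 < p) (hK : 0 < K)
    (hpK : γ + 1 < p * K) :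
    ∃ C : ℝ, 0 < C ∧ ∀ y : EuclideanSpace ℝ (Fin n), ‖y‖ < 1 →
      ∀ x' : EuclideanSpace ℝ (Fin n), ‖x'‖ = 1 →
        ∫ r in Ioo (0:ℝ) 1, (1 - r) ^ γ / ‖x' - r • y‖ ^ (p * K)
          ≤ C * ‖x' - y‖ ^ (γ + 1 - p * K) := by
  set q := p * K with hqdef
  have hq0 : 0 < q := by nlinarith
  have hγ1 : (0:ℝ) < γ + 1 := by linarith
  have hqγ : (0:ℝ) < q - (γ + 1) := by linarith
  refine ⟨(4:ℝ) ^ q * (1 / (γ + 1) + 1 / (q - (γ + 1))), by positivity, ?_⟩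
  intro y hy x' hx'
  set d := ‖x' - y‖ with hddef
  have hd : 0 < d := by
    rw [hddef, norm_pos_iff, sub_ne_zero]
    intro h
    rw [h] at hx'
    linarith [hx' ▸ hy]
  -- pointwise norm lower bound
  have hnorm : ∀ r ∈ Ioo (0:ℝ) 1, ((1 - r) + d) / 4 ≤ ‖x' - r • y‖ := by
    intro r hr
    have hr0 : 0 < r := hr.1
    have hr1 : r < 1 := hr.2
    have hry : ‖r • y‖ = r * ‖y‖ := by
      rw [norm_smul, Real.norm_eq_abs, abs_of_pos hr0]
    have h1 : 1 - r ≤ ‖x' - r • y‖ := by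
      have := norm_sub_norm_le x' (r • y)
      rw [hx', hry] at this
      nlinarith [hy, norm_nonneg y]
    have h2 : d ≤ 2 * ‖x' - r • y‖ := by
      have htri : ‖x' - y‖ ≤ ‖x' - r • y‖ + ‖r • y - y‖ := by
        have := norm_sub_le_norm_sub_add_norm_sub x' (r • y) y
        exact this
      have hsub : ‖r • y - y‖ = (1 - r) * ‖y‖ := by
        have : r • y - y = -((1 - r) • y) := by
          rw [sub_smul, one_smul]; abel
        rw [this, norm_neg, norm_smul, Real.norm_eq_abs, abs_of_pos (by linarith)]
      rw [← hddef] at htri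
      rw [hsub] at htri
      nlinarith [hy, norm_nonneg y, h1]
    linarith
  -- pointwise comparison of integrands
  have hptwise : ∀ r ∈ Ioo (0:ℝ) 1,
      (1 - r) ^ γ / ‖x' - r • y‖ ^ q
        ≤ (4:ℝ) ^ q * ((1 - r) ^ γ * ((1 - r) + d) ^ (-q)) := by
    intro r hr
    have hr1 : r < 1 := hr.2
    have hs0 : (0:ℝ) < 1 - r := by linarith
    have hsd : (0:ℝ) < (1 - r) + d := by linarith
    have hb := hnorm r hr
    have hbpos : (0:ℝ) < ‖x' - r • y‖ := lt_of_lt_of_le (by positivity) hb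
    have hpow : (((1 - r) + d) / 4) ^ q ≤ ‖x' - r • y‖ ^ q :=
      Real.rpow_le_rpow (by positivity) hb hq0.le
    have hinv : ‖x' - r • y‖ ^ (-q) ≤ (((1 - r) + d) / 4) ^ (-q) :=
      Real.rpow_le_rpow_of_nonpos (by positivity) hb (by linarith)
    have hdiv : (((1 - r) + d) / 4) ^ (-q) = (4:ℝ) ^ q * ((1 - r) + d) ^ (-q) := by
      rw [Real.div_rpow hsd.le (by norm_num : (0:ℝ) ≤ 4), Real.rpow_neg (by norm_num : (0:ℝ) ≤ 4)]
      rw [div_eq_mul_inv, inv_inv]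
      ring
    have hgnn : (0:ℝ) ≤ (1 - r) ^ γ := Real.rpow_nonneg hs0.le _
    calc (1 - r) ^ γ / ‖x' - r • y‖ ^ q
        = (1 - r) ^ γ * ‖x' - r • y‖ ^ (-q) := by
          rw [Real.rpow_neg hbpos.le, div_eq_mul_inv]
      _ ≤ (1 - r) ^ γ * ((((1 - r) + d) / 4) ^ (-q)) :=
          mul_le_mul_of_nonneg_left hinv hgnn
      _ = (4:ℝ) ^ q * ((1 - r) ^ γ * ((1 - r) + d) ^ (-q)) := by
          rw [hdiv]; ring
  -- integrability of majorant
  have hGint : IntegrableOn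
      (fun r => (4:ℝ) ^ q * ((1 - r) ^ γ * ((1 - r) + d) ^ (-q))) (Ioo (0:ℝ) 1) := by
    have h1 := (auxII γ q d hγ hq0 hd).comp_sub_left 1
    simp only [sub_zero, sub_self] at h1
    have h2 := (h1.symm).const_mul ((4:ℝ) ^ q)
    rwa [intervalIntegrable_iff_integrableOn_Ioo_of_le (by norm_num)] at h2
  -- main comparison
  have hmain : ∫ r in Ioo (0:ℝ) 1, (1 - r) ^ γ / ‖x' - r • y‖ ^ q
      ≤ ∫ r in Ioo (0:ℝ) 1, (4:ℝ) ^ q * ((1 - r) ^ γ * ((1 - r) + d) ^ (-q)) := by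
    apply integral_mono_of_nonneg ?_ hGint ?_
    · filter_upwards [MeasureTheory.ae_restrict_mem measurableSet_Ioo] with r hr
      have hs0 : (0:ℝ) < 1 - r := by linarith [hr.2]
      have hb := hnorm r hr
      have hbpos : (0:ℝ) < ‖x' - r • y‖ := lt_of_lt_of_le (by positivity) hb
      positivity
    · filter_upwards [MeasureTheory.ae_restrict_mem measurableSet_Ioo] with r hr
      exact hptwise r hr
  refine hmain.trans ?_
  rw [MeasureTheory.integral_const_mul]
  rw [mul_assoc]
  exact mul_le_mul_of_nonneg_left (auxBound γ q d hγ hpK hd) (by positivity)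
end

section
/- Let n ≥ 2 and m > n - 1. Then there exists a constant C > 0 such that for every r ∈ [0,1) and every unit vector y' ∈ ℝⁿ, ∫_{S^{n-1}} |r x' - y'|^{-m} dσ(x') ≤ C (1-r)^{-(m-n+1)}, where σ is the surface measure on the unit sphere S^{n-1} ⊂ ℝⁿ. -/
open MeasureTheory Set Metric Submodule
open scoped RealInnerProductSpace

lemma euclBall (k : ℕ) : ∃ c : ENNReal, c ≠ ⊤ ∧ ∀ t : ℝ, 0 ≤ t →
    μH[(k:ℝ)] (Metric.closedBall (0 : EuclideanSpace ℝ (Fin k)) t) ≤ c * ENNReal.ofReal (t^k) := by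
  set K : NNReal := (Fintype.card (Fin k) : NNReal) ^ (1 / (2:ENNReal)).toReal with hK
  have hanti : AntilipschitzWith K (WithLp.equiv 2 (Fin k → ℝ)) :=
    PiLp.antilipschitzWith_ofLp 2 _
  have hlip : LipschitzWith K ((WithLp.equiv 2 (Fin k → ℝ)).symm) :=
    hanti.to_rightInverse (WithLp.equiv 2 (Fin k → ℝ)).right_inv
  refine ⟨(K:ENNReal)^(k:ℝ) * ENNReal.ofReal (2^k), ?_, ?_⟩
  · exact ENNReal.mul_ne_top (ENNReal.rpow_ne_top_of_nonneg (by positivity) ENNReal.coe_ne_top)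
      ENNReal.ofReal_ne_top
  intro t ht
  have hsub : Metric.closedBall (0 : EuclideanSpace ℝ (Fin k)) t ⊆
      (WithLp.equiv 2 (Fin k → ℝ)).symm '' (Metric.closedBall (0 : Fin k → ℝ) t) := by
    intro x hx
    refine ⟨WithLp.equiv 2 (Fin k → ℝ) x, ?_, by simp⟩
    have := (PiLp.lipschitzWith_ofLp 2 (fun _ : Fin k => ℝ)).dist_le_mul x 0
    simp only [NNReal.coe_one, one_mul] at this
    simpa [Metric.mem_closedBall] using le_trans (by simpa using this)
      (by simpa [Metric.mem_closedBall] using hx)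
  calc μH[(k:ℝ)] (Metric.closedBall (0 : EuclideanSpace ℝ (Fin k)) t)
      ≤ μH[(k:ℝ)] ((WithLp.equiv 2 (Fin k → ℝ)).symm '' (Metric.closedBall (0 : Fin k → ℝ) t)) :=
        measure_mono hsub
    _ ≤ (K:ENNReal)^(k:ℝ) * μH[(k:ℝ)] (Metric.closedBall (0 : Fin k → ℝ) t) :=
        hlip.hausdorffMeasure_image_le (by positivity) _
    _ = (K:ENNReal)^(k:ℝ) * ENNReal.ofReal ((2*t)^k) := by
        rw [show ((k:ℝ)) = ((Fintype.card (Fin k) : ℕ) : ℝ) by simp,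
          hausdorffMeasure_pi_real, Real.volume_pi_closedBall 0 ht]
        simp
    _ ≤ (K:ENNReal)^(k:ℝ) * ENNReal.ofReal (2^k) * ENNReal.ofReal (t^k) := by
        rw [mul_assoc, ← ENNReal.ofReal_mul (by positivity), mul_pow]

lemma hyperBall (n : ℕ) (hn : 2 ≤ n) : ∃ c : ENNReal, c ≠ ⊤ ∧
    ∀ (y : EuclideanSpace ℝ (Fin n)), y ≠ 0 → ∀ t : ℝ, 0 ≤ t →
    μH[(n:ℝ)-1] ((((ℝ ∙ y)ᗮ : Submodule ℝ _) : Set (EuclideanSpace ℝ (Fin n))) ∩ closedBall 0 t)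
      ≤ c * ENNReal.ofReal (t^(n-1)) := by
  obtain ⟨c, hc, hball⟩ := euclBall (n-1)
  refine ⟨c, hc, ?_⟩
  intro y hy t ht
  haveI : Fact (Module.finrank ℝ (EuclideanSpace ℝ (Fin n)) = (n-1) + 1) :=
    ⟨by rw [finrank_euclideanSpace_fin]; omega⟩
  set e := (OrthonormalBasis.fromOrthogonalSpanSingleton (𝕜 := ℝ) (n-1) hy).repr
  have hd : (n:ℝ) - 1 = ((n-1 : ℕ) : ℝ) := by
    have : (1:ℕ) ≤ n := by omega
    push_cast [Nat.cast_sub this]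
    ring
  have hset : (((ℝ ∙ y)ᗮ : Submodule ℝ _) : Set (EuclideanSpace ℝ (Fin n))) ∩ closedBall 0 t
      = Subtype.val '' (closedBall (0 : (ℝ ∙ y)ᗮ) t) := by
    ext x
    constructor
    · rintro ⟨hx1, hx2⟩
      exact ⟨⟨x, hx1⟩, by simpa [Metric.mem_closedBall, dist_zero_right,
        Submodule.norm_coe] using hx2, rfl⟩
    · rintro ⟨v, hv, rfl⟩
      refine ⟨v.2, ?_⟩
      simpa [Metric.mem_closedBall, dist_zero_right] using hv
  rw [hset, isometry_subtype_coe.hausdorffMeasure_image (Or.inl (by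
    have : (2:ℝ) ≤ n := by exact_mod_cast hn
    linarith)) _]
  have himg : e '' (closedBall (0 : (ℝ ∙ y)ᗮ) t) = closedBall 0 t := by
    have := e.toIsometryEquiv.image_closedBall 0 t
    simpa using this
  rw [← e.isometry.hausdorffMeasure_image (Or.inr e.surjective), himg, hd]
  exact hball t ht

lemma sqrtLip {s u : ℝ} (hs0 : 0 ≤ s) (hs : s ≤ 1/2) (hu0 : 0 ≤ u) (hu : u ≤ 1/2) :
    |Real.sqrt (1 - s^2) - Real.sqrt (1 - u^2)| ≤ |s - u| := by
  set A := Real.sqrt (1 - s^2) with hA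
  set B := Real.sqrt (1 - u^2) with hB
  have hA2 : A^2 = 1 - s^2 := Real.sq_sqrt (by nlinarith)
  have hB2 : B^2 = 1 - u^2 := Real.sq_sqrt (by nlinarith)
  have hAge : (1:ℝ)/2 ≤ A := by
    rw [hA]
    rw [show (1:ℝ)/2 = Real.sqrt ((1/2)^2) by rw [Real.sqrt_sq (by norm_num)]]
    exact Real.sqrt_le_sqrt (by nlinarith)
  have hBge : (1:ℝ)/2 ≤ B := by
    rw [hB]
    rw [show (1:ℝ)/2 = Real.sqrt ((1/2)^2) by rw [Real.sqrt_sq (by norm_num)]]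
    exact Real.sqrt_le_sqrt (by nlinarith)
  have key : |A - B| * (A + B) = |u^2 - s^2| := by
    rw [← abs_of_nonneg (by linarith : (0:ℝ) ≤ A + B), ← abs_mul]
    congr 1
    nlinarith [hA2, hB2]
  have h2 : |u^2 - s^2| ≤ |s - u| := by
    rw [show u^2 - s^2 = (u - s) * (u + s) by ring, abs_mul, abs_sub_comm]
    have : |u + s| ≤ 1 := by rw [abs_of_nonneg (by linarith)]; linarith
    nlinarith [abs_nonneg (s - u)]
  calc |A - B| = |A - B| * 1 := by ring
    _ ≤ |A - B| * (A + B) := by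
        have := abs_nonneg (A - B); nlinarith
    _ = |u^2 - s^2| := key
    _ ≤ |s - u| := h2

lemma phiLip {n : ℕ} (y : EuclideanSpace ℝ (Fin n)) (hy : ‖y‖ = 1) :
    LipschitzOnWith 2 (fun v : EuclideanSpace ℝ (Fin n) => v + Real.sqrt (1 - ‖v‖^2) • y)
      (closedBall 0 (1/2)) := by
  apply LipschitzOnWith.of_dist_le_mul
  intro v hv w hw
  simp only [Metric.mem_closedBall, dist_zero_right] at hv hw
  have hvw : |Real.sqrt (1 - ‖v‖^2) - Real.sqrt (1 - ‖w‖^2)| ≤ ‖v - w‖ := by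
    calc |Real.sqrt (1 - ‖v‖^2) - Real.sqrt (1 - ‖w‖^2)| ≤ |‖v‖ - ‖w‖| :=
          sqrtLip (norm_nonneg v) hv (norm_nonneg w) hw
      _ ≤ ‖v - w‖ := abs_norm_sub_norm_le v w
  rw [dist_eq_norm]
  calc ‖(v + Real.sqrt (1 - ‖v‖^2) • y) - (w + Real.sqrt (1 - ‖w‖^2) • y)‖
      = ‖(v - w) + (Real.sqrt (1 - ‖v‖^2) - Real.sqrt (1 - ‖w‖^2)) • y‖ := by
        congr 1; module
    _ ≤ ‖v - w‖ + ‖(Real.sqrt (1 - ‖v‖^2) - Real.sqrt (1 - ‖w‖^2)) • y‖ := norm_add_le _ _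
    _ = ‖v - w‖ + |Real.sqrt (1 - ‖v‖^2) - Real.sqrt (1 - ‖w‖^2)| := by
        rw [norm_smul, hy, Real.norm_eq_abs, mul_one]
    _ ≤ ‖v - w‖ + ‖v - w‖ := by linarith
    _ = 2 * dist v w := by rw [dist_eq_norm]; ring

lemma capSmall (n : ℕ) (hn : 2 ≤ n) : ∃ c : ENNReal, c ≠ ⊤ ∧
    ∀ (y : EuclideanSpace ℝ (Fin n)), ‖y‖ = 1 → ∀ t : ℝ, 0 ≤ t → t ≤ 1/4 →
    μH[(n:ℝ)-1] (sphere (0 : EuclideanSpace ℝ (Fin n)) 1 ∩ closedBall y t)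
      ≤ c * ENNReal.ofReal (t^(n-1)) := by
  obtain ⟨c, hc, hball⟩ := hyperBall n hn
  have hn1 : (0:ℝ) ≤ (n:ℝ) - 1 := by
    have : (2:ℝ) ≤ n := by exact_mod_cast hn
    linarith
  refine ⟨2^((n:ℝ)-1) * c,
    ENNReal.mul_ne_top (ENNReal.rpow_ne_top_of_nonneg hn1 (by norm_num)) hc, ?_⟩
  intro y hy t ht ht4
  have hy0 : y ≠ 0 := by intro h; rw [h, norm_zero] at hy; norm_num at hy
  set Φ := fun v : EuclideanSpace ℝ (Fin n) => v + Real.sqrt (1 - ‖v‖^2) • y with hΦ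
  set H := (((ℝ ∙ y)ᗮ : Submodule ℝ _) : Set (EuclideanSpace ℝ (Fin n))) ∩ closedBall 0 t with hH
  have hsub : sphere (0 : EuclideanSpace ℝ (Fin n)) 1 ∩ closedBall y t ⊆ Φ '' H := by
    rintro x ⟨hx1, hx2⟩
    rw [mem_sphere_zero_iff_norm] at hx1
    rw [Metric.mem_closedBall, dist_eq_norm] at hx2
    set cxy := ⟪x, y⟫ with hcxy
    have hxy2 : ‖x - y‖^2 = 2 - 2 * cxy := by
      rw [norm_sub_sq_real, hx1, hy]; ring
    have hcle : cxy = 1 - ‖x - y‖^2 / 2 := by linarith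
    have hcge : 1 - 1/32 ≤ cxy := by
      have : ‖x - y‖^2 ≤ (1/4)^2 := by
        apply pow_le_pow_left₀ (norm_nonneg _) (le_trans hx2 ht4)
      linarith
    set v := x - cxy • y with hv
    have hvmem : v ∈ (ℝ ∙ y)ᗮ := by
      rw [Submodule.mem_orthogonal_singleton_iff_inner_right]
      rw [hv, inner_sub_right, real_inner_smul_right, real_inner_self_eq_norm_sq, hy]
      rw [real_inner_comm]
      simp [hcxy]
    have hvnorm2 : ‖v‖^2 = 1 - cxy^2 := by
      have h := norm_sub_sq_real x (cxy • y)
      rw [real_inner_smul_right, norm_smul, Real.norm_eq_abs, hx1, hy] at h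
      rw [← hv] at h
      rw [h, ← hcxy]
      nlinarith [sq_abs cxy]
    have hvle : ‖v‖ ≤ ‖x - y‖ := by
      have h1 : ‖v‖^2 ≤ ‖x - y‖^2 := by
        rw [hvnorm2]
        nlinarith
      nlinarith [norm_nonneg v, norm_nonneg (x - y)]
    refine ⟨v, ⟨hvmem, ?_⟩, ?_⟩
    · rw [Metric.mem_closedBall, dist_zero_right]; exact le_trans hvle hx2
    · rw [hΦ]
      simp only
      have : Real.sqrt (1 - ‖v‖^2) = cxy := by
        rw [hvnorm2, show 1 - (1 - cxy^2) = cxy^2 by ring, Real.sqrt_sq (by linarith)]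
      rw [this, hv]
      abel
  have hHsub : H ⊆ closedBall 0 (1/2) := by
    rintro v ⟨_, hv⟩
    simp only [Metric.mem_closedBall, dist_zero_right] at hv ⊢
    linarith
  calc μH[(n:ℝ)-1] (sphere (0 : EuclideanSpace ℝ (Fin n)) 1 ∩ closedBall y t)
      ≤ μH[(n:ℝ)-1] (Φ '' H) := measure_mono hsub
    _ ≤ (2:NNReal)^((n:ℝ)-1) * μH[(n:ℝ)-1] H :=
        ((phiLip y hy).mono hHsub).hausdorffMeasure_image_le hn1
    _ ≤ (2:NNReal)^((n:ℝ)-1) * (c * ENNReal.ofReal (t^(n-1))) := by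
        gcongr
        exact hball y hy0 t ht
    _ = 2^((n:ℝ)-1) * c * ENNReal.ofReal (t^(n-1)) := by
        rw [mul_assoc, ENNReal.coe_ofNat]

lemma sphereFinite (n : ℕ) (hn : 2 ≤ n) :
    μH[(n:ℝ)-1] (sphere (0 : EuclideanSpace ℝ (Fin n)) 1) ≠ ⊤ := by
  obtain ⟨c, hc, hcap⟩ := capSmall n hn
  set S := sphere (0 : EuclideanSpace ℝ (Fin n)) 1 with hS
  have hcomp : IsCompact S := isCompact_sphere 0 1
  have hcover : S ⊆ ⋃ i : S, ball (i : EuclideanSpace ℝ (Fin n)) (1/4) := by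
    intro x hx
    exact mem_iUnion.2 ⟨⟨x, hx⟩, by simp [Metric.mem_ball]⟩
  obtain ⟨F, hF⟩ := hcomp.elim_finite_subcover
    (fun i : S => ball (i : EuclideanSpace ℝ (Fin n)) (1/4)) (fun i => isOpen_ball) hcover
  have hle : μH[(n:ℝ)-1] S ≤ ∑ i ∈ F, (c * ENNReal.ofReal ((1/4:ℝ)^(n-1))) := by
    calc μH[(n:ℝ)-1] S
        ≤ μH[(n:ℝ)-1] (⋃ i ∈ F, S ∩ closedBall (i : EuclideanSpace ℝ (Fin n)) (1/4)) := by
          apply measure_mono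
          intro x hx
          obtain ⟨i, hi, hxi⟩ := mem_iUnion₂.1 (hF hx)
          exact mem_iUnion₂.2 ⟨i, hi, hx, ball_subset_closedBall hxi⟩
      _ ≤ ∑ i ∈ F, μH[(n:ℝ)-1] (S ∩ closedBall (i : EuclideanSpace ℝ (Fin n)) (1/4)) :=
          measure_biUnion_finset_le F _
      _ ≤ ∑ i ∈ F, (c * ENNReal.ofReal ((1/4:ℝ)^(n-1))) := by
          apply Finset.sum_le_sum
          intro i _
          exact hcap i (by simpa using i.2) (1/4) (by norm_num) le_rfl
  have hlt : μH[(n:ℝ)-1] S < ⊤ := lt_of_le_of_lt hle (by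
    apply ENNReal.sum_lt_top.2
    intro i _
    exact ENNReal.mul_lt_top hc.lt_top ENNReal.ofReal_lt_top)
  exact hlt.ne

lemma capBound (n : ℕ) (hn : 2 ≤ n) : ∃ Ccap : ℝ, 0 < Ccap ∧
    ∀ (y : EuclideanSpace ℝ (Fin n)), ‖y‖ = 1 → ∀ t : ℝ, 0 ≤ t →
    (μH[(n:ℝ)-1] (sphere (0 : EuclideanSpace ℝ (Fin n)) 1 ∩ closedBall y t)).toReal
      ≤ Ccap * t^(n-1) := by
  obtain ⟨c, hc, hsmall⟩ := capSmall n hn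
  set M := (μH[(n:ℝ)-1] (sphere (0 : EuclideanSpace ℝ (Fin n)) 1)).toReal with hM
  have hM0 : 0 ≤ M := ENNReal.toReal_nonneg
  refine ⟨c.toReal + (M+1) * 4^(n-1) + 1, by positivity, ?_⟩
  intro y hy t ht
  have htn : (0:ℝ) ≤ t^(n-1) := by positivity
  rcases le_or_gt t (1/4) with h14 | h14
  · have h := hsmall y hy t ht h14
    have h2 : (μH[(n:ℝ)-1] (sphere (0 : EuclideanSpace ℝ (Fin n)) 1 ∩ closedBall y t)).toReal
        ≤ (c * ENNReal.ofReal (t^(n-1))).toReal :=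
      ENNReal.toReal_mono (ENNReal.mul_ne_top hc ENNReal.ofReal_ne_top) h
    rw [ENNReal.toReal_mul, ENNReal.toReal_ofReal htn] at h2
    have hc0 : 0 ≤ c.toReal := ENNReal.toReal_nonneg
    nlinarith [mul_nonneg (by positivity : (0:ℝ) ≤ (M+1)*4^(n-1)+1) htn]
  · have h2 : (μH[(n:ℝ)-1] (sphere (0 : EuclideanSpace ℝ (Fin n)) 1 ∩ closedBall y t)).toReal
        ≤ M :=
      ENNReal.toReal_mono (sphereFinite n hn) (measure_mono inter_subset_left)
    have h4t : (1:ℝ) ≤ 4 * t := by linarith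
    have h4tn : (1:ℝ) ≤ (4*t)^(n-1) := one_le_pow₀ h4t
    have hc0 : 0 ≤ c.toReal := ENNReal.toReal_nonneg
    have hexpand : (4*t)^(n-1) = 4^(n-1) * t^(n-1) := mul_pow 4 t (n-1)
    nlinarith

lemma normExpand {n : ℕ} (x y : EuclideanSpace ℝ (Fin n)) (hx : ‖x‖ = 1) (hy : ‖y‖ = 1)
    (r : ℝ) : ‖r • x - y‖^2 = (1-r)^2 + r * ‖x - y‖^2 := by
  have h1 := norm_sub_sq_real (r • x) y
  rw [real_inner_smul_left, norm_smul, Real.norm_eq_abs, hx, hy] at h1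
  have h2 := norm_sub_sq_real x y
  rw [hx, hy] at h2
  nlinarith [sq_abs r]

lemma lowerBound {n : ℕ} (x y : EuclideanSpace ℝ (Fin n)) (hx : ‖x‖ = 1) (hy : ‖y‖ = 1)
    {r : ℝ} (hr : 1/2 ≤ r) : ‖x - y‖ / 2 ≤ ‖r • x - y‖ := by
  have h := normExpand x y hx hy r
  have h2 : (‖x - y‖ / 2)^2 ≤ ‖r • x - y‖^2 := by
    nlinarith [sq_nonneg (1 - r), sq_nonneg (‖x - y‖)]
  calc ‖x - y‖ / 2 = Real.sqrt ((‖x - y‖ / 2)^2) := (Real.sqrt_sq (by positivity)).symm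
    _ ≤ Real.sqrt (‖r • x - y‖^2) := Real.sqrt_le_sqrt h2
    _ = ‖r • x - y‖ := Real.sqrt_sq (norm_nonneg _)

lemma lowerBound' {n : ℕ} (x y : EuclideanSpace ℝ (Fin n)) (hx : ‖x‖ = 1) (hy : ‖y‖ = 1)
    {r : ℝ} (hr0 : 0 ≤ r) : 1 - r ≤ ‖r • x - y‖ := by
  have := norm_sub_norm_le y (r • x)
  rw [norm_smul, Real.norm_eq_abs, abs_of_nonneg hr0, hx, norm_sub_rev, hy] at this
  linarith

theorem stmt3 (n : ℕ) (hn : 2 ≤ n) (m : ℝ) (hm : (n : ℝ) - 1 < m) :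
    ∃ C : ℝ, 0 < C ∧ ∀ r : ℝ, 0 ≤ r → r < 1 → ∀ y' : EuclideanSpace ℝ (Fin n), ‖y'‖ = 1 →
      ∫ x' in Metric.sphere (0 : EuclideanSpace ℝ (Fin n)) 1, ‖r • x' - y'‖ ^ (-m) ∂μH[(n : ℝ) - 1]
        ≤ C * (1 - r) ^ (-(m - (n : ℝ) + 1)) := by
  classical
  obtain ⟨Ccap, hCcap, hcap⟩ := capBound n hn
  have hn2 : (2:ℝ) ≤ (n:ℝ) := by exact_mod_cast hn
  set β := m - (n:ℝ) + 1 with hβdef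
  have hβ : 0 < β := by rw [hβdef]; linarith
  have hm0 : 0 < m := by linarith
  set q := (2:ℝ)^(-β) with hq
  have hq0 : 0 < q := Real.rpow_pos_of_pos two_pos _
  have hq1 : q < 1 := Real.rpow_lt_one_of_one_lt_of_neg one_lt_two (by linarith)
  set S := Metric.sphere (0 : EuclideanSpace ℝ (Fin n)) 1 with hSdef
  set σS := (μH[(n:ℝ)-1] S).toReal with hσ
  have hσ0 : 0 ≤ σS := ENNReal.toReal_nonneg
  have h2m : (0:ℝ) < (2:ℝ)^m := Real.rpow_pos_of_pos two_pos m
  have h4m : (0:ℝ) < (4:ℝ)^m := Real.rpow_pos_of_pos (by norm_num) m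
  have hqinv : (0:ℝ) < (1-q)⁻¹ := inv_pos.2 (by linarith)
  set C := (2:ℝ)^m * (σS + 1) + Ccap * (4:ℝ)^m * (1-q)⁻¹ with hC
  have hCpos : 0 < C := by positivity
  refine ⟨C, hCpos, ?_⟩
  intro r hr0 hr1 y hy
  set a := 1 - r with ha
  have ha0 : 0 < a := by rw [ha]; linarith
  have ha1 : a ≤ 1 := by rw [ha]; linarith
  have hSmeas : MeasurableSet S := isClosed_sphere.measurableSet
  haveI : IsFiniteMeasure ((μH[(n:ℝ)-1] : Measure (EuclideanSpace ℝ (Fin n))).restrict S) :=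
    ⟨by rw [Measure.restrict_apply_univ]; exact (sphereFinite n hn).lt_top⟩
  set f := fun x : EuclideanSpace ℝ (Fin n) => ‖r • x - y‖ ^ (-m) with hf
  have hflb : ∀ x ∈ S, a ≤ ‖r • x - y‖ := by
    intro x hx
    exact lowerBound' x y (mem_sphere_zero_iff_norm.mp hx) hy hr0
  have hfmeas : AEStronglyMeasurable f
      ((μH[(n:ℝ)-1] : Measure (EuclideanSpace ℝ (Fin n))).restrict S) := by
    have hcont : Continuous fun x : EuclideanSpace ℝ (Fin n) => ‖r • x - y‖ :=
      ((continuous_const_smul r).sub continuous_const).norm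
    refine ContinuousOn.aestronglyMeasurable ?_ hSmeas
    intro x hx
    refine ContinuousAt.continuousWithinAt ?_
    exact hcont.continuousAt.rpow_const
      (Or.inl (ne_of_gt (lt_of_lt_of_le ha0 (hflb x hx))))
  have hfnonneg : ∀ x, 0 ≤ f x := fun x => Real.rpow_nonneg (norm_nonneg _) _
  have hfub : ∀ x ∈ S, f x ≤ a ^ (-m) := fun x hx =>
    Real.rpow_le_rpow_of_nonpos ha0 (hflb x hx) (by linarith)
  have hfint : IntegrableOn f S μH[(n:ℝ)-1] := by
    apply Integrable.mono' (integrable_const (a^(-m)))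
    · exact hfmeas
    · rw [ae_restrict_iff' hSmeas]
      filter_upwards with x hx
      rw [Real.norm_eq_abs, abs_of_nonneg (hfnonneg x)]
      exact hfub x hx
  have hone_le : (1:ℝ) ≤ a ^ (-β) :=
    Real.one_le_rpow_of_pos_of_le_one_of_nonpos ha0 ha1 (by linarith)
  rcases lt_or_ge r (1/2) with hhalf | hhalf
  · -- easy case : r < 1/2
    have hax : ∀ x ∈ S, f x ≤ (2:ℝ)^m := by
      intro x hx
      refine le_trans (hfub x hx) ?_
      have h12 : (1:ℝ)/2 ≤ a := by rw [ha]; linarith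
      calc a^(-m) ≤ ((1:ℝ)/2)^(-m) :=
            Real.rpow_le_rpow_of_nonpos (by norm_num) h12 (by linarith)
        _ = (2:ℝ)^m := by
            rw [show (1:ℝ)/2 = (2:ℝ)^(-1:ℝ) by rw [Real.rpow_neg_one]; norm_num,
              ← Real.rpow_mul (by norm_num)]
            norm_num
    calc ∫ x in S, f x ∂μH[(n:ℝ)-1] ≤ ∫ _x in S, (2:ℝ)^m ∂μH[(n:ℝ)-1] :=
          setIntegral_mono_on hfint (integrable_const _) hSmeas hax
      _ = σS * (2:ℝ)^m := by rw [setIntegral_const, smul_eq_mul, measureReal_def]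
      _ ≤ C * 1 := by
          rw [mul_one, hC]
          nlinarith [mul_pos (mul_pos hCcap h4m) hqinv]
      _ ≤ C * a^(-β) := by
          exact mul_le_mul_of_nonneg_left hone_le hCpos.le
  · -- main case : 1/2 ≤ r
    set ρ : ℕ → ℝ := fun k => 2^k * a with hρ
    have hρpos : ∀ k, 0 < ρ k := fun k => mul_pos (pow_pos two_pos k) ha0
    obtain ⟨K, hK⟩ := pow_unbounded_of_one_lt (2/a) (one_lt_two : (1:ℝ) < 2)
    have hK2 : 2 ≤ ρ K := by
      rw [div_lt_iff₀ ha0] at hK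
      rw [hρ]
      simp only
      linarith
    set Ek : ℕ → Set (EuclideanSpace ℝ (Fin n)) := fun k =>
      S ∩ (closedBall y (ρ k) \ (if k = 0 then (∅ : Set _) else closedBall y (ρ (k-1)))) with hEk
    have hEkmeas : ∀ k, MeasurableSet (Ek k) := by
      intro k
      apply hSmeas.inter
      apply measurableSet_closedBall.diff
      split_ifs
      exacts [MeasurableSet.empty, measurableSet_closedBall]
    have hEksub : ∀ k, Ek k ⊆ S ∩ closedBall y (ρ k) := fun k =>
      inter_subset_inter_right _ diff_subset
    set c : ℕ → ℝ := fun k => (ρ k / 4) ^ (-m) with hc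
    have hcnonneg : ∀ k, 0 ≤ c k := fun k => Real.rpow_nonneg (by positivity) _
    set g := fun x => ∑ k ∈ Finset.range (K+1), (Ek k).indicator (fun _ => c k) x with hg
    have hcover : ∀ x ∈ S, ∃ k, k ≤ K ∧ x ∈ Ek k ∧ f x ≤ c k := by
      intro x hx
      have hx1 : ‖x‖ = 1 := mem_sphere_zero_iff_norm.mp hx
      have ht2 : ‖x - y‖ ≤ 2 := by
        calc ‖x - y‖ ≤ ‖x‖ + ‖y‖ := norm_sub_le x y
          _ = 2 := by rw [hx1, hy]; norm_num
      have hPK : ‖x - y‖ ≤ ρ K := le_trans ht2 hK2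
      have hex : ∃ k, ‖x - y‖ ≤ ρ k := ⟨K, hPK⟩
      have hk0K : Nat.find hex ≤ K := Nat.find_min' hex hPK
      set k0 := Nat.find hex with hk0
      have hspec : ‖x - y‖ ≤ ρ k0 := Nat.find_spec hex
      have hlow : ρ k0 / 4 ≤ ‖r • x - y‖ := by
        rcases Nat.eq_zero_or_pos k0 with h0 | h0
        · have : ρ k0 = a := by rw [h0, hρ]; simp
          rw [this]
          have := lowerBound' x y hx1 hy hr0
          rw [← ha] at this
          linarith
        · have hj : ¬ (‖x - y‖ ≤ ρ (k0-1)) := Nat.find_min hex (by omega)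
          push_neg at hj
          have h2 : ρ (k0 - 1) = ρ k0 / 2 := by
            rw [hρ]
            simp only
            rw [show k0 = (k0 - 1) + 1 by omega, pow_succ]
            simp only [Nat.add_sub_cancel]
            ring
          have hlb := lowerBound x y hx1 hy hhalf
          rw [h2] at hj
          linarith
      refine ⟨k0, hk0K, ⟨hx, mem_closedBall_iff_norm.mpr hspec, ?_⟩, ?_⟩
      · split_ifs with h0
        · simp
        · rw [Metric.mem_closedBall, dist_eq_norm]
          have hj : ¬ (‖x - y‖ ≤ ρ (k0-1)) := Nat.find_min hex (by omega)
          exact hj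
      · simp only [hc]
        exact Real.rpow_le_rpow_of_nonpos (by positivity) hlow (by linarith)
    have hfg : ∀ x ∈ S, f x ≤ g x := by
      intro x hx
      obtain ⟨k, hkK, hxk, hfk⟩ := hcover x hx
      calc f x ≤ c k := hfk
        _ = (Ek k).indicator (fun _ => c k) x := (indicator_of_mem hxk (fun _ => c k)).symm
        _ ≤ g x := by
            rw [hg]
            exact Finset.single_le_sum
              (f := fun j => (Ek j).indicator (fun _ => c j) x)
              (fun j _ => indicator_nonneg (fun _ _ => hcnonneg j) x)
              (Finset.mem_range.2 (by omega))
    have hEkfin : ∀ k, μH[(n:ℝ)-1] (Ek k) < ⊤ := by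
      intro k
      refine lt_of_le_of_lt (measure_mono ?_) (sphereFinite n hn).lt_top
      exact (hEksub k).trans inter_subset_left
    have hterm_int : ∀ k, Integrable (fun x => (Ek k).indicator (fun _ => c k) x)
        ((μH[(n:ℝ)-1] : Measure (EuclideanSpace ℝ (Fin n))).restrict S) := by
      intro k
      rw [integrable_indicator_iff (hEkmeas k)]
      apply (integrableOn_const_iff (by simp)).2
      right
      calc ((μH[(n:ℝ)-1] : Measure (EuclideanSpace ℝ (Fin n))).restrict S) (Ek k)
          = μH[(n:ℝ)-1] (Ek k ∩ S) := Measure.restrict_apply (hEkmeas k)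
        _ ≤ μH[(n:ℝ)-1] (Ek k) := measure_mono inter_subset_left
        _ < ⊤ := hEkfin k
    have hgint : Integrable g ((μH[(n:ℝ)-1] : Measure (EuclideanSpace ℝ (Fin n))).restrict S) := by
      rw [hg]
      exact integrable_finset_sum _ (fun k _ => hterm_int k)
    have hgval : ∫ x in S, g x ∂μH[(n:ℝ)-1]
        = ∑ k ∈ Finset.range (K+1), c k * (μH[(n:ℝ)-1] (Ek k)).toReal := by
      rw [hg, integral_finset_sum _ (fun k _ => hterm_int k)]
      apply Finset.sum_congr rfl
      intro k _
      rw [integral_indicator_const _ (hEkmeas k), measureReal_def, Measure.restrict_apply (hEkmeas k),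
        inter_eq_self_of_subset_left ((hEksub k).trans inter_subset_left), smul_eq_mul, mul_comm]
    have hterm : ∀ k ∈ Finset.range (K+1),
        c k * (μH[(n:ℝ)-1] (Ek k)).toReal ≤ Ccap * (4:ℝ)^m * a^(-β) * q^k := by
      intro k _
      have hρk := hρpos k
      have h1 : (μH[(n:ℝ)-1] (Ek k)).toReal ≤ Ccap * (ρ k)^(n-1) := by
        refine le_trans (ENNReal.toReal_mono ?_ (measure_mono (hEksub k))) (hcap y hy (ρ k) hρk.le)
        exact (lt_of_le_of_lt (measure_mono inter_subset_left) (sphereFinite n hn).lt_top).ne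
      have e0 : (ρ k / 4)^(-m) = (ρ k)^(-m) * (4:ℝ)^m := by
        rw [Real.div_rpow hρk.le (by norm_num), Real.rpow_neg (by norm_num : (0:ℝ) ≤ 4),
          div_eq_mul_inv, inv_inv]
      have e1 : (ρ k : ℝ)^(n-1 : ℕ) = (ρ k)^((n:ℝ)-1) := by
        rw [← Real.rpow_natCast (ρ k) (n-1)]
        congr 1
        push_cast [Nat.cast_sub (by omega : 1 ≤ n)]
        ring
      have e2 : (ρ k)^(-m) * (ρ k)^((n:ℝ)-1) = (ρ k)^(-β) := by
        rw [← Real.rpow_add hρk]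
        congr 1
        rw [hβdef]
        ring
      have e3 : (ρ k)^(-β) = q^k * a^(-β) := by
        simp only [hρ]
        rw [Real.mul_rpow (by positivity) ha0.le]
        congr 1
        rw [← Real.rpow_natCast (2:ℝ) k, ← Real.rpow_mul (by norm_num : (0:ℝ) ≤ 2),
          mul_comm ((k:ℝ)) (-β), Real.rpow_mul (by norm_num : (0:ℝ) ≤ 2), Real.rpow_natCast, hq]
      calc c k * (μH[(n:ℝ)-1] (Ek k)).toReal
          ≤ c k * (Ccap * (ρ k)^(n-1)) := mul_le_mul_of_nonneg_left h1 (hcnonneg k)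
        _ = Ccap * (4:ℝ)^m * ((ρ k)^(-m) * (ρ k)^((n:ℝ)-1)) := by simp only [hc]; rw [e0, e1]; ring
        _ = Ccap * (4:ℝ)^m * (ρ k)^(-β) := by rw [e2]
        _ = Ccap * (4:ℝ)^m * a^(-β) * q^k := by rw [e3]; ring
    have hgeom : ∑ k ∈ Finset.range (K+1), q^k ≤ (1-q)⁻¹ := by
      refine le_trans (Summable.sum_le_tsum (Finset.range (K+1)) (fun i _ => (pow_nonneg hq0.le i))
        (summable_geometric_of_lt_one hq0.le hq1)) ?_
      rw [tsum_geometric_of_lt_one hq0.le hq1]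
    calc ∫ x in S, f x ∂μH[(n:ℝ)-1] ≤ ∫ x in S, g x ∂μH[(n:ℝ)-1] :=
          setIntegral_mono_on hfint hgint hSmeas hfg
      _ = ∑ k ∈ Finset.range (K+1), c k * (μH[(n:ℝ)-1] (Ek k)).toReal := hgval
      _ ≤ ∑ k ∈ Finset.range (K+1), Ccap * (4:ℝ)^m * a^(-β) * q^k := Finset.sum_le_sum hterm
      _ = Ccap * (4:ℝ)^m * a^(-β) * ∑ k ∈ Finset.range (K+1), q^k := by rw [← Finset.mul_sum]
      _ ≤ Ccap * (4:ℝ)^m * a^(-β) * (1-q)⁻¹ :=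
          mul_le_mul_of_nonneg_left hgeom (by positivity)
      _ ≤ C * a^(-β) := by
          rw [hC]
          have haβ : (0:ℝ) ≤ a^(-β) := Real.rpow_nonneg ha0.le _
          nlinarith [mul_nonneg (mul_nonneg h2m.le (by linarith : (0:ℝ) ≤ σS+1)) haβ]
end

section
/- Let 0 < p ≤ 1, m > -1, λ > 0, and let M : [0,1) → [0,∞) be increasing. Then there is a constant C = C(p, m, λ) such that for all r ∈ [0,1), ( ∫₀¹ M(R) (1-R)^m (1-rR)^{-λ} dR )^p ≤ C ∫₀¹ M(R)^p (1-R)^{mp + p - 1} (1-rR)^{-λ p} dR. -/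
open MeasureTheory Set
open scoped ENNReal

private lemma tsum_rpow_le_aux {p : ℝ} (hp : 0 < p) (hp1 : p ≤ 1) (a : ℕ → ℝ≥0∞) :
    (∑' n, a n) ^ p ≤ ∑' n, a n ^ p := by
  have hfin : ∀ s : Finset ℕ, (∑ i ∈ s, a i) ^ p ≤ ∑ i ∈ s, a i ^ p := by
    intro s
    induction s using Finset.cons_induction with
    | empty => simp [ENNReal.zero_rpow_of_pos hp]
    | cons i s hi ih =>
      rw [Finset.sum_cons, Finset.sum_cons]
      exact le_trans (ENNReal.rpow_add_le_add_rpow _ _ hp.le hp1) (by gcongr)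
  rw [ENNReal.tsum_eq_iSup_sum,
    Monotone.map_iSup_of_continuousAt (f := fun x : ℝ≥0∞ => x ^ p)
      ENNReal.continuous_rpow_const.continuousAt
      (fun x y h => ENNReal.rpow_le_rpow h hp.le)
      (by simp [ENNReal.zero_rpow_of_pos hp])]
  exact iSup_le fun s => le_trans (hfin s) (ENNReal.sum_le_tsum s)

private lemma rpow_four_comp {x y e : ℝ} (hx : 0 < x) (hy : 0 < y)
    (h1 : x ≤ 4 * y) (h2 : y ≤ 4 * x) :
    x ^ e ≤ y ^ e * 2 ^ (2 * |e|) := by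
  have h4 : (4:ℝ) = (2:ℝ) ^ (2:ℝ) := by
    rw [show ((2:ℝ) ^ (2:ℝ)) = (2:ℝ) ^ ((2:ℕ):ℝ) by norm_num, Real.rpow_natCast]; norm_num
  rcases le_or_gt 0 e with he | he
  · calc x ^ e ≤ (4 * y) ^ e := Real.rpow_le_rpow hx.le h1 he
      _ = 4 ^ e * y ^ e := Real.mul_rpow (by norm_num) hy.le
      _ = 2 ^ (2 * e) * y ^ e := by rw [h4, ← Real.rpow_mul (by norm_num : (0:ℝ) ≤ 2)]
      _ ≤ 2 ^ (2 * |e|) * y ^ e :=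
          mul_le_mul_of_nonneg_right
            (Real.rpow_le_rpow_of_exponent_le one_le_two (by nlinarith [le_abs_self e]))
            (Real.rpow_nonneg hy.le e)
      _ = y ^ e * 2 ^ (2 * |e|) := mul_comm _ _
  · have hx4 : y / 4 ≤ x := by linarith
    calc x ^ e ≤ (y / 4) ^ e := Real.rpow_le_rpow_of_nonpos (by positivity) hx4 he.le
      _ = y ^ e / 4 ^ e := Real.div_rpow hy.le (by norm_num : (0:ℝ) ≤ 4) e
      _ = y ^ e * (4 ^ e)⁻¹ := div_eq_mul_inv _ _
      _ = y ^ e * 4 ^ (-e) := by rw [← Real.rpow_neg (by norm_num : (0:ℝ) ≤ 4)]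
      _ = y ^ e * 2 ^ (2 * |e|) := by
          rw [h4, ← Real.rpow_mul (by norm_num : (0:ℝ) ≤ 2), abs_of_neg he]

private lemma rpow_four_comp' {x y e : ℝ} (hx : 0 < x) (hy : 0 < y)
    (h1 : x ≤ 4 * y) (h2 : y ≤ 4 * x) :
    x ^ e * 2 ^ (-(2 * |e|)) ≤ y ^ e := by
  have h := rpow_four_comp (e := e) hx hy h1 h2
  have h2p : (0:ℝ) ≤ 2 ^ (-(2 * |e|)) := Real.rpow_nonneg (by norm_num) _
  calc x ^ e * 2 ^ (-(2 * |e|)) ≤ (y ^ e * 2 ^ (2 * |e|)) * 2 ^ (-(2 * |e|)) :=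
        mul_le_mul_of_nonneg_right h h2p
    _ = y ^ e * 2 ^ (2 * |e| + -(2 * |e|)) := by
        rw [mul_assoc, ← Real.rpow_add (by norm_num : (0:ℝ) < 2)]
    _ = y ^ e := by simp

theorem stmt9 (p m lam : ℝ) (hp : 0 < p) (hp1 : p ≤ 1) (hm : -1 < m) (hlam : 0 < lam) :
    ∃ C : ℝ, 0 < C ∧ ∀ M : ℝ → ℝ,
      (∀ R ∈ Ico (0:ℝ) 1, 0 ≤ M R) → MonotoneOn M (Ico (0:ℝ) 1) →
      ∀ r ∈ Ico (0:ℝ) 1,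
      (∫⁻ R in Ioo (0:ℝ) 1, ENNReal.ofReal (M R * (1 - R) ^ m * (1 - r * R) ^ (-lam))) ^ p
        ≤ ENNReal.ofReal C *
          ∫⁻ R in Ioo (0:ℝ) 1,
            ENNReal.ofReal (M R ^ p * (1 - R) ^ (m * p + p - 1) * (1 - r * R) ^ (-(lam * p))) := by
  classical
  set q : ℝ := m * p + p - 1 with hq
  refine ⟨2 ^ (2 * |m| * p - p + 2 * |q| + 2), Real.rpow_pos_of_pos two_pos _, ?_⟩
  intro M hM0 hMono r hr
  set s : ℕ → ℝ := fun n => (2:ℝ) ^ (-(n:ℝ)) with hs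
  set t : ℕ → ℝ := fun n => 1 - s n with ht
  set I : ℕ → Set ℝ := fun n => Ico (t n) (t (n+1)) with hI
  have hs_pos : ∀ n, 0 < s n := fun n => Real.rpow_pos_of_pos two_pos _
  have hs_le_one : ∀ n, s n ≤ 1 := fun n =>
    Real.rpow_le_one_of_one_le_of_nonpos one_le_two (by simp)
  have hs_succ : ∀ n, s (n + 1) = s n / 2 := by
    intro n
    simp only [hs]
    rw [show (-((n+1:ℕ):ℝ)) = -(n:ℝ) + (-1) by push_cast; ring,
      Real.rpow_add two_pos, Real.rpow_neg_one]
    ring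
  have hts : ∀ k, t k = 1 - s k := fun k => by simp [ht]
  have ht_mem : ∀ n, t n ∈ Ico (0:ℝ) 1 := by
    intro n
    rw [hts n]
    exact ⟨by linarith [hs_le_one n], by linarith [hs_pos n]⟩
  have ht_mono : ∀ a b : ℕ, a ≤ b → t a ≤ t b := by
    intro a b hab
    rw [hts a, hts b]
    have : s b ≤ s a := by
      simp only [hs]
      exact Real.rpow_le_rpow_of_exponent_le one_le_two
        (neg_le_neg (by exact_mod_cast hab))
    linarith
  have hrt_pos : ∀ n, 0 < 1 - r * t (n+1) := by
    intro n
    have h1 := (ht_mem (n+1)).1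
    have h2 := (ht_mem (n+1)).2
    nlinarith [hr.1, hr.2]
  have hMt : ∀ n, 0 ≤ M (t (n+1)) := fun n => hM0 _ (ht_mem (n+1))
  have hmeasI : ∀ n, MeasurableSet (I n) := fun n => measurableSet_Ico
  have hdisj : Pairwise (Function.onFun Disjoint I) := by
    intro a b hab
    wlog hlt : a < b generalizing a b
    · exact (this hab.symm (hab.lt_or_gt.resolve_left hlt)).symm
    have hle : t (a+1) ≤ t b := ht_mono _ _ (by omega)
    refine Set.disjoint_left.mpr ?_
    intro x hxa hxb
    simp only [hI, Set.mem_Ico] at hxa hxb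
    exact absurd hxb.1 (not_le.mpr (lt_of_lt_of_le hxa.2 hle))
  have hdisj2 : Pairwise (Function.onFun Disjoint fun n => I (n+1)) :=
    fun a b hab => hdisj (show a+1 ≠ b+1 by omega)
  have hvol : ∀ n, volume (I n) = ENNReal.ofReal (s (n+1)) := by
    intro n
    simp only [hI]
    rw [Real.volume_Ico]
    congr 1
    rw [hts n, hts (n+1)]
    linarith [hs_succ n]
  have hcover : Ioo (0:ℝ) 1 ⊆ ⋃ n, I n := by
    intro x hx
    have hx0 : 0 < x := hx.1
    have hx1 : x < 1 := hx.2
    have hP : ∃ n, s n < 1 - x := by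
      obtain ⟨n, hn⟩ := exists_pow_lt_of_lt_one (by linarith : (0:ℝ) < 1 - x)
        (by norm_num : (2:ℝ)⁻¹ < 1)
      refine ⟨n, ?_⟩
      have hsn : s n = ((2:ℝ)⁻¹) ^ n := by
        simp only [hs]
        rw [Real.rpow_neg (by norm_num), Real.rpow_natCast, inv_pow]
      rw [hsn]; exact hn
    have hNspec : s (Nat.find hP) < 1 - x := Nat.find_spec hP
    have hN0 : Nat.find hP ≠ 0 := by
      intro h
      have hs0 : s 0 = 1 := by simp [hs]
      rw [h, hs0] at hNspec; linarith
    obtain ⟨k, hk⟩ := Nat.exists_eq_succ_of_ne_zero hN0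
    have hkmin : ¬ s k < 1 - x := Nat.find_min hP (by omega)
    push_neg at hkmin
    rw [hk] at hNspec
    refine Set.mem_iUnion.mpr ⟨k, ?_⟩
    simp only [hI, Set.mem_Ico]
    rw [hts k, hts (k+1)]
    constructor <;> linarith
  have hcover2 : (⋃ n, I (n+1)) ⊆ Ioo (0:ℝ) 1 := by
    intro x hx
    obtain ⟨n, hn⟩ := Set.mem_iUnion.mp hx
    simp only [hI, Set.mem_Ico] at hn
    have h1 : t 1 ≤ t (n+1) := ht_mono _ _ (by omega)
    have hs1 : s 1 = 1/2 := by
      rw [hs_succ 0, show s 0 = 1 by simp [hs]]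
    constructor
    · have : (0:ℝ) < t 1 := by rw [hts 1, hs1]; norm_num
      linarith [hn.1]
    · exact lt_of_lt_of_le hn.2 (ht_mem (n+1+1)).2.le
  -- the comparison sequences
  set A : ℕ → ℝ := fun n =>
    M (t (n+1)) * 2 ^ (-(n:ℝ) * m + 2 * |m| + (-(n:ℝ) - 1)) * (1 - r * t (n+1)) ^ (-lam)
    with hA
  set B : ℕ → ℝ := fun n =>
    M (t (n+1)) ^ p * 2 ^ (-(n:ℝ) * q - 2 * |q| + (-(n:ℝ) - 2)) * (1 - r * t (n+1)) ^ (-(lam * p))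
    with hB
  have hA_nonneg : ∀ n, 0 ≤ A n := by
    intro n
    simp only [hA]
    exact mul_nonneg (mul_nonneg (hMt n) (Real.rpow_nonneg (by norm_num) _))
      (Real.rpow_nonneg (hrt_pos n).le _)
  -- Step 1 : LHS integral ≤ ∑ A n
  have step1 : (∫⁻ R in Ioo (0:ℝ) 1,
        ENNReal.ofReal (M R * (1 - R) ^ m * (1 - r * R) ^ (-lam)))
      ≤ ∑' n, ENNReal.ofReal (A n) := by
    have hsub : (∫⁻ R in Ioo (0:ℝ) 1,
          ENNReal.ofReal (M R * (1 - R) ^ m * (1 - r * R) ^ (-lam)))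
        ≤ ∫⁻ R in ⋃ n, I n,
          ENNReal.ofReal (M R * (1 - R) ^ m * (1 - r * R) ^ (-lam)) :=
      lintegral_mono_set hcover
    rw [lintegral_iUnion hmeasI hdisj] at hsub
    refine hsub.trans (ENNReal.tsum_le_tsum fun n => ?_)
    have hconst_nonneg : 0 ≤ M (t (n+1)) * 2 ^ (-(n:ℝ) * m + 2 * |m|)
        * (1 - r * t (n+1)) ^ (-lam) :=
      mul_nonneg (mul_nonneg (hMt n) (Real.rpow_nonneg (by norm_num) _))
        (Real.rpow_nonneg (hrt_pos n).le _)
    calc ∫⁻ x in I n, ENNReal.ofReal (M x * (1 - x) ^ m * (1 - r * x) ^ (-lam))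
        ≤ ∫⁻ _ in I n, ENNReal.ofReal (M (t (n+1)) * 2 ^ (-(n:ℝ) * m + 2 * |m|)
            * (1 - r * t (n+1)) ^ (-lam)) := by
          refine setLIntegral_mono' (hmeasI n) ?_
          intro x hx
          simp only [hI, Set.mem_Ico] at hx
          have hx0 : 0 ≤ x := le_trans (ht_mem n).1 hx.1
          have hx1 : x < 1 := lt_of_lt_of_le hx.2 (ht_mem (n+1)).2.le
          have h1x : 0 < 1 - x := by linarith
          have hxle : 1 - x ≤ s n := by
            have := hts n; linarith [hx.1]
          have hxge : s n ≤ 4 * (1 - x) := by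
            have h1 := hts (n+1)
            have h2 := hs_succ n
            have h3 : x < 1 - s (n+1) := by rw [← h1]; exact hx.2
            linarith
          apply ENNReal.ofReal_le_ofReal
          have hMx : M x ≤ M (t (n+1)) := hMono ⟨hx0, hx1⟩ (ht_mem (n+1)) hx.2.le
          have hp1' : (1 - x) ^ m ≤ 2 ^ (-(n:ℝ) * m + 2 * |m|) := by
            have h := rpow_four_comp (e := m) h1x (hs_pos n) (by linarith) hxge
            have hsm : s n ^ m = 2 ^ (-(n:ℝ) * m) := by
              simp only [hs]
              rw [← Real.rpow_mul (by norm_num : (0:ℝ) ≤ 2)]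
            rw [Real.rpow_add two_pos, ← hsm]
            exact h
          have hrx : 0 < 1 - r * x := by nlinarith [hr.1, hr.2]
          have hp2' : (1 - r * x) ^ (-lam) ≤ (1 - r * t (n+1)) ^ (-lam) := by
            refine Real.rpow_le_rpow_of_nonpos (hrt_pos n) ?_ (by linarith)
            have := mul_le_mul_of_nonneg_left hx.2.le hr.1
            linarith
          have n1 : 0 ≤ (1 - x) ^ m := Real.rpow_nonneg h1x.le m
          have n2 : 0 ≤ (2:ℝ) ^ (-(n:ℝ) * m + 2 * |m|) := Real.rpow_nonneg (by norm_num) _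
          have n3 : 0 ≤ (1 - r * x) ^ (-lam) := Real.rpow_nonneg hrx.le _
          exact mul_le_mul (mul_le_mul hMx hp1' n1 (hMt n)) hp2' n3
            (mul_nonneg (hMt n) n2)
      _ = ENNReal.ofReal (M (t (n+1)) * 2 ^ (-(n:ℝ) * m + 2 * |m|)
            * (1 - r * t (n+1)) ^ (-lam)) * volume (I n) := setLIntegral_const _ _
      _ = ENNReal.ofReal (A n) := by
          rw [hvol n, ← ENNReal.ofReal_mul hconst_nonneg]
          congr 1
          have hs1 : s (n+1) = 2 ^ (-(n:ℝ) - 1) := by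
            simp only [hs]; congr 1; push_cast; ring
          simp only [hA]
          rw [hs1, Real.rpow_add two_pos (-(n:ℝ) * m + 2 * |m|) (-(n:ℝ) - 1)]
          ring
  -- Step 2 : (∑ A n)^p ≤ ∑ (A n)^p
  have step2 : (∑' n, ENNReal.ofReal (A n)) ^ p ≤ ∑' n, ENNReal.ofReal (A n ^ p) := by
    refine (tsum_rpow_le_aux hp hp1 _).trans_eq ?_
    exact tsum_congr fun n => ENNReal.ofReal_rpow_of_nonneg (hA_nonneg n) hp.le
  -- Step 4 : A n ^ p = C₀ * B n
  have step4 : ∀ n, A n ^ p = 2 ^ (2 * |m| * p - p + 2 * |q| + 2) * B n := by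
    intro n
    simp only [hA, hB]
    rw [Real.mul_rpow (mul_nonneg (hMt n) (Real.rpow_nonneg (by norm_num) _))
          (Real.rpow_nonneg (hrt_pos n).le _),
        Real.mul_rpow (hMt n) (Real.rpow_nonneg (by norm_num) _),
        ← Real.rpow_mul (by norm_num : (0:ℝ) ≤ 2),
        ← Real.rpow_mul (hrt_pos n).le,
        show (-lam) * p = -(lam * p) by ring,
        show (-(n:ℝ) * m + 2 * |m| + (-(n:ℝ) - 1)) * p
            = (2 * |m| * p - p + 2 * |q| + 2) + (-(n:ℝ) * q - 2 * |q| + (-(n:ℝ) - 2)) by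
          rw [hq]; ring,
        Real.rpow_add two_pos]
    ring
  have step5 : (∑' n, ENNReal.ofReal (A n ^ p))
      = ENNReal.ofReal (2 ^ (2 * |m| * p - p + 2 * |q| + 2)) * ∑' n, ENNReal.ofReal (B n) := by
    rw [← ENNReal.tsum_mul_left]
    exact tsum_congr fun n => by
      rw [step4 n, ENNReal.ofReal_mul (Real.rpow_nonneg (by norm_num) _)]
  -- Step 6 : ∑ B n ≤ RHS integral
  have step6 : (∑' n, ENNReal.ofReal (B n))
      ≤ ∫⁻ R in Ioo (0:ℝ) 1,
          ENNReal.ofReal (M R ^ p * (1 - R) ^ q * (1 - r * R) ^ (-(lam * p))) := by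
    have key : ∀ n, ENNReal.ofReal (B n)
        ≤ ∫⁻ R in I (n+1),
            ENNReal.ofReal (M R ^ p * (1 - R) ^ q * (1 - r * R) ^ (-(lam * p))) := by
      intro n
      have hc_nonneg : 0 ≤ M (t (n+1)) ^ p * 2 ^ (-(n:ℝ) * q - 2 * |q|)
          * (1 - r * t (n+1)) ^ (-(lam * p)) :=
        mul_nonneg (mul_nonneg (Real.rpow_nonneg (hMt n) p)
          (Real.rpow_nonneg (by norm_num) _)) (Real.rpow_nonneg (hrt_pos n).le _)
      have hBsplit : B n = (M (t (n+1)) ^ p * 2 ^ (-(n:ℝ) * q - 2 * |q|)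
          * (1 - r * t (n+1)) ^ (-(lam * p))) * s (n+1+1) := by
        simp only [hB]
        have hs2 : s (n+1+1) = 2 ^ (-(n:ℝ) - 2) := by
          simp only [hs]; congr 1; push_cast; ring
        rw [hs2, show -(n:ℝ) * q - 2 * |q| + (-(n:ℝ) - 2)
              = (-(n:ℝ) * q - 2 * |q|) + (-(n:ℝ) - 2) by ring,
            Real.rpow_add two_pos]
        ring
      calc ENNReal.ofReal (B n)
          = ENNReal.ofReal (M (t (n+1)) ^ p * 2 ^ (-(n:ℝ) * q - 2 * |q|)
              * (1 - r * t (n+1)) ^ (-(lam * p))) * volume (I (n+1)) := by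
            rw [hvol (n+1), hBsplit, ENNReal.ofReal_mul hc_nonneg]
        _ = ∫⁻ _ in I (n+1), ENNReal.ofReal (M (t (n+1)) ^ p * 2 ^ (-(n:ℝ) * q - 2 * |q|)
              * (1 - r * t (n+1)) ^ (-(lam * p))) := (setLIntegral_const _ _).symm
        _ ≤ _ := by
            refine setLIntegral_mono' (hmeasI (n+1)) ?_
            intro x hx
            simp only [hI, Set.mem_Ico] at hx
            have hx0 : 0 ≤ x := le_trans (ht_mem (n+1)).1 hx.1
            have hx1 : x < 1 := lt_of_lt_of_le hx.2 (ht_mem (n+1+1)).2.le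
            have h1x : 0 < 1 - x := by linarith
            apply ENNReal.ofReal_le_ofReal
            have hMx : M (t (n+1)) ≤ M x := hMono (ht_mem (n+1)) ⟨hx0, hx1⟩ hx.1
            have hMp : M (t (n+1)) ^ p ≤ M x ^ p := Real.rpow_le_rpow (hMt n) hMx hp.le
            have hqb : (2:ℝ) ^ (-(n:ℝ) * q - 2 * |q|) ≤ (1 - x) ^ q := by
              have hb1 : s n ≤ 4 * (1 - x) := by
                have e1 := hs_succ n
                have e2 := hs_succ (n+1)
                have e3 : x < 1 - s (n+1+1) := by rw [← hts (n+1+1)]; exact hx.2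
                linarith
              have hb2 : 1 - x ≤ 4 * s n := by
                have e1 := hs_succ n
                have e2 : 1 - s (n+1) ≤ x := by rw [← hts (n+1)]; exact hx.1
                linarith [hs_pos n]
              have h := rpow_four_comp' (x := s n) (y := 1 - x) (e := q)
                (hs_pos n) h1x hb1 hb2
              have hsm : s n ^ q = 2 ^ (-(n:ℝ) * q) := by
                simp only [hs]
                rw [← Real.rpow_mul (by norm_num : (0:ℝ) ≤ 2)]
              rw [show -(n:ℝ) * q - 2 * |q| = -(n:ℝ) * q + -(2 * |q|) by ring,
                Real.rpow_add two_pos, ← hsm]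
              exact h
            have hrx : 0 < 1 - r * x := by nlinarith [hr.1, hr.2]
            have hlb : (1 - r * t (n+1)) ^ (-(lam * p)) ≤ (1 - r * x) ^ (-(lam * p)) := by
              refine Real.rpow_le_rpow_of_nonpos hrx ?_ (by nlinarith)
              have := mul_le_mul_of_nonneg_left hx.1 hr.1
              linarith
            have n2 : 0 ≤ (2:ℝ) ^ (-(n:ℝ) * q - 2 * |q|) := Real.rpow_nonneg (by norm_num) _
            have n4 : 0 ≤ (1 - r * t (n+1)) ^ (-(lam * p)) :=
              Real.rpow_nonneg (hrt_pos n).le _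
            have nMp : 0 ≤ M x ^ p := Real.rpow_nonneg (hM0 x ⟨hx0, hx1⟩) p
            exact mul_le_mul (mul_le_mul hMp hqb n2 nMp) hlb n4
              (mul_nonneg nMp (Real.rpow_nonneg h1x.le q))
    calc (∑' n, ENNReal.ofReal (B n))
        ≤ ∑' n, ∫⁻ R in I (n+1),
            ENNReal.ofReal (M R ^ p * (1 - R) ^ q * (1 - r * R) ^ (-(lam * p))) :=
          ENNReal.tsum_le_tsum key
      _ = ∫⁻ R in ⋃ n, I (n+1),
            ENNReal.ofReal (M R ^ p * (1 - R) ^ q * (1 - r * R) ^ (-(lam * p))) :=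
          (lintegral_iUnion (fun n => hmeasI (n+1)) hdisj2 _).symm
      _ ≤ _ := lintegral_mono_set hcover2
  calc (∫⁻ R in Ioo (0:ℝ) 1,
        ENNReal.ofReal (M R * (1 - R) ^ m * (1 - r * R) ^ (-lam))) ^ p
      ≤ (∑' n, ENNReal.ofReal (A n)) ^ p := ENNReal.rpow_le_rpow step1 hp.le
    _ ≤ ∑' n, ENNReal.ofReal (A n ^ p) := step2
    _ = ENNReal.ofReal (2 ^ (2 * |m| * p - p + 2 * |q| + 2))
          * ∑' n, ENNReal.ofReal (B n) := step5
    _ ≤ _ := mul_le_mul_right step6 _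
end

section
/- Let n ≥ 2, γ ≥ 0, and K > γ + n - 1 (here K = t(n + m - α) with the paper's parameters). Then there exists C > 0 such that for every y in the open unit ball of ℝⁿ, ∫_{S^{n-1}} |x' - y|^{-K} dσ(x') ≤ C (1 - |y|)^{-K + n - 1}. -/
open MeasureTheory Set

open Measure Metric ENNReal
open scoped Pointwise RealInnerProductSpace NNReal

set_option maxHeartbeats 2000000

noncomputable def VB (m : ℕ) : ℝ≥0∞ :=
  μH[(m : ℝ)] (Metric.closedBall (0 : EuclideanSpace ℝ (Fin m)) 1)

lemma VB_lt_top (m : ℕ) : VB m < ∞ := by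
  have h := (isCompact_closedBall (0 : EuclideanSpace ℝ (Fin m)) 1).measure_lt_top
    (μ := μH[(Module.finrank ℝ (EuclideanSpace ℝ (Fin m)) : ℝ)])
  simpa [VB, finrank_euclideanSpace] using h

lemma model_ball (m : ℕ) {r : ℝ} (hr : 0 < r) :
    μH[(m : ℝ)] (Metric.closedBall (0 : EuclideanSpace ℝ (Fin m)) r)
      = ENNReal.ofReal r ^ (m : ℝ) * VB m := by
  have h1 : Metric.closedBall (0 : EuclideanSpace ℝ (Fin m)) r
      = r • Metric.closedBall (0 : EuclideanSpace ℝ (Fin m)) 1 := by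
    rw [smul_unitClosedBall, Real.norm_of_nonneg hr.le]
  rw [h1, Measure.hausdorffMeasure_smul₀ (by positivity) hr.ne' _]
  rw [VB]
  have : ((‖r‖₊ ^ (m:ℝ) : ℝ≥0) : ℝ≥0∞) = ENNReal.ofReal r ^ (m:ℝ) := by
    rw [ENNReal.coe_rpow_of_nonneg _ (by positivity)]
    congr 1
    simp [Real.nnnorm_of_nonneg hr.le, ENNReal.ofReal]
    ext1
    simp [Real.coe_toNNReal _ hr.le]
  rw [← this]
  rfl

lemma sqrt_aux {a b : ℝ} (ha0 : 0 ≤ a) (ha : a ≤ 1/2) (hb0 : 0 ≤ b) (hb : b ≤ 1/2) :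
    |Real.sqrt (1 - a^2) - Real.sqrt (1 - b^2)| ≤ |a - b| := by
  have hsa : Real.sqrt (1 - a^2) ^ 2 = 1 - a^2 := Real.sq_sqrt (by nlinarith)
  have hsb : Real.sqrt (1 - b^2) ^ 2 = 1 - b^2 := Real.sq_sqrt (by nlinarith)
  have hsa2 : (1/2 : ℝ) ≤ Real.sqrt (1 - a^2) := by
    rw [show (1/2 : ℝ) = Real.sqrt (1/4) by
      rw [show (1/4 : ℝ) = (1/2)^2 by norm_num, Real.sqrt_sq (by norm_num)]]
    exact Real.sqrt_le_sqrt (by nlinarith)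
  have hsb2 : (1/2 : ℝ) ≤ Real.sqrt (1 - b^2) := by
    rw [show (1/2 : ℝ) = Real.sqrt (1/4) by
      rw [show (1/4 : ℝ) = (1/2)^2 by norm_num, Real.sqrt_sq (by norm_num)]]
    exact Real.sqrt_le_sqrt (by nlinarith)
  rw [abs_le]
  constructor
  · rcases abs_cases (a - b) with ⟨h, _⟩ | ⟨h, _⟩ <;> nlinarith
  · rcases abs_cases (a - b) with ⟨h, _⟩ | ⟨h, _⟩ <;> nlinarith

lemma hyperplane_meas {n : ℕ} (hn : 1 ≤ n) (p : EuclideanSpace ℝ (Fin n)) (hp : ‖p‖ = 1)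
    {r : ℝ} (hr : 0 < r) :
    μH[(n:ℝ)-1] ((((ℝ ∙ p)ᗮ : Submodule ℝ (EuclideanSpace ℝ (Fin n))) : Set (EuclideanSpace ℝ (Fin n)))
        ∩ Metric.closedBall 0 r)
      ≤ ENNReal.ofReal r ^ ((n:ℝ)-1) * VB (n-1) := by
  set H : Submodule ℝ (EuclideanSpace ℝ (Fin n)) := (ℝ ∙ p)ᗮ with hH
  have hp0 : p ≠ 0 := by intro h; rw [h] at hp; simp at hp
  have hfr : Module.finrank ℝ H = n - 1 := by
    have h1 : Module.finrank ℝ (ℝ ∙ p) = 1 := finrank_span_singleton hp0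
    have h2 := Submodule.finrank_add_finrank_orthogonal (K := (ℝ ∙ p))
    rw [h1, finrank_euclideanSpace] at h2
    simp only [Fintype.card_fin] at h2
    rw [← hH] at h2
    omega
  -- isometric equivalence from model space to H
  let e₁ : EuclideanSpace ℝ (Fin (n-1)) ≃ₗᵢ[ℝ] EuclideanSpace ℝ (Fin (Module.finrank ℝ H)) :=
    LinearIsometryEquiv.piLpCongrLeft 2 ℝ ℝ (finCongr hfr.symm)
  let e : EuclideanSpace ℝ (Fin (n-1)) ≃ₗᵢ[ℝ] H :=
    e₁.trans (stdOrthonormalBasis ℝ H).repr.symm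
  let φ : EuclideanSpace ℝ (Fin (n-1)) →ₗᵢ[ℝ] EuclideanSpace ℝ (Fin n) :=
    H.subtypeₗᵢ.comp e.toLinearIsometry
  have himg : ((H : Set (EuclideanSpace ℝ (Fin n))) ∩ Metric.closedBall 0 r)
      = φ '' Metric.closedBall 0 r := by
    ext x
    constructor
    · rintro ⟨hxH, hxb⟩
      refine ⟨e.symm ⟨x, hxH⟩, ?_, ?_⟩
      · rw [mem_closedBall_zero_iff] at hxb ⊢
        simpa using hxb
      · simp [φ]
    · rintro ⟨u, hu, rfl⟩
      refine ⟨(e u).2, ?_⟩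
      rw [mem_closedBall_zero_iff] at hu ⊢
      simpa using hu
  have hE0 : (0:ℝ) ≤ (n:ℝ)-1 := by
    have : (1:ℝ) ≤ (n:ℝ) := by exact_mod_cast hn
    linarith
  rw [himg, φ.isometry.hausdorffMeasure_image (Or.inl hE0)]
  have hcast : ((n-1 : ℕ) : ℝ) = (n:ℝ)-1 := by
    rw [Nat.cast_sub hn]; norm_num
  rw [← hcast, model_ball _ hr]

lemma smallcap {n : ℕ} (hn : 1 ≤ n) (p : EuclideanSpace ℝ (Fin n)) (hp : ‖p‖ = 1)
    {r : ℝ} (hr : 0 < r) (hr2 : r ≤ 1/2) :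
    μH[(n:ℝ)-1] (Metric.sphere (0 : EuclideanSpace ℝ (Fin n)) 1 ∩ Metric.closedBall p r)
      ≤ (2:ℝ≥0∞) ^ ((n:ℝ)-1) * (ENNReal.ofReal r ^ ((n:ℝ)-1) * VB (n-1)) := by
  have hE0 : (0:ℝ) ≤ (n:ℝ)-1 := by
    have : (1:ℝ) ≤ (n:ℝ) := by exact_mod_cast hn
    linarith
  set H : Submodule ℝ (EuclideanSpace ℝ (Fin n)) := (ℝ ∙ p)ᗮ with hH
  set s : Set (EuclideanSpace ℝ (Fin n)) :=
    (H : Set (EuclideanSpace ℝ (Fin n))) ∩ Metric.closedBall 0 r with hs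
  set F : EuclideanSpace ℝ (Fin n) → EuclideanSpace ℝ (Fin n) :=
    fun v => Real.sqrt (1 - ‖v‖^2) • p + v with hF
  have hpp : ⟪p, p⟫ = 1 := by
    rw [real_inner_self_eq_norm_sq, hp]; norm_num
  -- the cap is contained in the image of s under F
  have hsub : Metric.sphere (0 : EuclideanSpace ℝ (Fin n)) 1 ∩ Metric.closedBall p r ⊆ F '' s := by
    rintro x ⟨hx1, hx2⟩
    rw [mem_sphere_zero_iff_norm] at hx1
    rw [Metric.mem_closedBall, dist_eq_norm] at hx2
    set t : ℝ := ⟪p, x⟫ with ht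
    set v : EuclideanSpace ℝ (Fin n) := x - t • p with hv
    have hpv : ⟪p, v⟫ = 0 := by
      rw [hv, inner_sub_right, inner_smul_right, hpp]; ring
    have hxv : x = t • p + v := by rw [hv]; abel
    have h1 : 1 = t^2 + ‖v‖^2 := by
      have := norm_add_sq_real (t • p) v
      rw [← hxv, hx1, inner_smul_left, hpv, norm_smul, hp] at this
      simp only [RCLike.star_def, starRingEnd_apply, star_trivial, Real.norm_eq_abs] at this
      nlinarith [sq_abs t, this]
    have h2 : ‖x - p‖^2 = (t-1)^2 + ‖v‖^2 := by
      have hxp : x - p = (t-1) • p + v := by rw [hv, sub_smul, one_smul]; abel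
      have := norm_add_sq_real ((t-1) • p) v
      rw [← hxp, inner_smul_left, hpv, norm_smul, hp] at this
      simp only [RCLike.star_def, starRingEnd_apply, star_trivial, Real.norm_eq_abs] at this
      nlinarith [sq_abs (t-1), this]
    have hxpr : ‖x - p‖ ≤ r := hx2
    have hxp2 : (t-1)^2 + ‖v‖^2 ≤ r^2 := by
      rw [← h2]; nlinarith [norm_nonneg (x - p)]
    have hvr : ‖v‖ ≤ r := by nlinarith [norm_nonneg v, sq_nonneg (t-1)]
    have htpos : 0 ≤ t := by nlinarith [sq_nonneg (‖v‖)]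
    have hsq : Real.sqrt (1 - ‖v‖^2) = t := by
      rw [show 1 - ‖v‖^2 = t^2 by linarith, Real.sqrt_sq htpos]
    refine ⟨v, ⟨?_, ?_⟩, ?_⟩
    · exact Submodule.mem_orthogonal_singleton_iff_inner_right.mpr hpv
    · rw [mem_closedBall_zero_iff]; exact hvr
    · rw [hF]; simp only; rw [hsq, ← hxv]
  -- F is 2-Lipschitz on s
  have hlip : LipschitzOnWith 2 F s := by
    apply LipschitzOnWith.of_dist_le_mul
    rintro v ⟨hvH, hvb⟩ w ⟨hwH, hwb⟩
    rw [mem_closedBall_zero_iff] at hvb hwb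
    have hpv : ⟪p, v⟫ = 0 := Submodule.mem_orthogonal_singleton_iff_inner_right.mp hvH
    have hpw : ⟪p, w⟫ = 0 := Submodule.mem_orthogonal_singleton_iff_inner_right.mp hwH
    set c : ℝ := Real.sqrt (1 - ‖v‖^2) - Real.sqrt (1 - ‖w‖^2) with hc
    have hFvw : F v - F w = c • p + (v - w) := by
      rw [hF]; simp only; rw [hc, sub_smul]; abel
    have hinner : ⟪c • p, v - w⟫ = 0 := by
      rw [inner_smul_left, inner_sub_right, hpv, hpw]
      simp
    have hnorm2 : ‖F v - F w‖^2 = c^2 + ‖v - w‖^2 := by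
      have := norm_add_sq_real (c • p) (v - w)
      rw [← hFvw, hinner, norm_smul, hp, mul_one] at this
      simp only [Real.norm_eq_abs] at this
      rw [this, sq_abs]; ring
    have hcle : |c| ≤ ‖v - w‖ := by
      have h1 : |c| ≤ |‖v‖ - ‖w‖| :=
        sqrt_aux (norm_nonneg v) (le_trans hvb hr2) (norm_nonneg w) (le_trans hwb hr2)
      exact le_trans h1 (abs_norm_sub_norm_le v w)
    rw [dist_eq_norm, dist_eq_norm]
    have h2 : ((2:ℝ≥0):ℝ) = 2 := by norm_num
    rw [h2]
    nlinarith [norm_nonneg (F v - F w), norm_nonneg (v - w), abs_nonneg c, sq_abs c,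
      le_abs_self c, neg_abs_le c]
  calc μH[(n:ℝ)-1] (Metric.sphere (0 : EuclideanSpace ℝ (Fin n)) 1 ∩ Metric.closedBall p r)
      ≤ μH[(n:ℝ)-1] (F '' s) := measure_mono hsub
    _ ≤ ((2:ℝ≥0) : ℝ≥0∞) ^ ((n:ℝ)-1) * μH[(n:ℝ)-1] s := hlip.hausdorffMeasure_image_le hE0
    _ ≤ (2:ℝ≥0∞) ^ ((n:ℝ)-1) * (ENNReal.ofReal r ^ ((n:ℝ)-1) * VB (n-1)) := by
        rw [show ((2:ℝ≥0) : ℝ≥0∞) = (2:ℝ≥0∞) by norm_num]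
        exact mul_le_mul_right (hyperplane_meas hn p hp hr) _

lemma sphere_fin {n : ℕ} (hn : 1 ≤ n) :
    μH[(n:ℝ)-1] (Metric.sphere (0 : EuclideanSpace ℝ (Fin n)) 1) < ∞ := by
  have hcomp : IsCompact (Metric.sphere (0 : EuclideanSpace ℝ (Fin n)) 1) :=
    isCompact_sphere 0 1
  have hcover : Metric.sphere (0 : EuclideanSpace ℝ (Fin n)) 1 ⊆
      ⋃ x ∈ Metric.sphere (0 : EuclideanSpace ℝ (Fin n)) 1, Metric.ball x (1/2) := by
    intro x hx
    exact mem_biUnion hx (Metric.mem_ball_self (by norm_num))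
  obtain ⟨b, hbsub, hbfin, hbcover⟩ := hcomp.elim_finite_subcover_image
    (fun x _ => Metric.isOpen_ball) hcover
  have hsub2 : Metric.sphere (0 : EuclideanSpace ℝ (Fin n)) 1 ⊆
      ⋃ x ∈ hbfin.toFinset, Metric.sphere (0 : EuclideanSpace ℝ (Fin n)) 1 ∩
        Metric.closedBall x (1/2) := by
    intro x hx
    obtain ⟨c, hc, hxc⟩ := mem_iUnion₂.mp (hbcover hx)
    exact mem_iUnion₂.mpr ⟨c, hbfin.mem_toFinset.mpr hc, hx, Metric.ball_subset_closedBall hxc⟩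
  calc μH[(n:ℝ)-1] (Metric.sphere (0 : EuclideanSpace ℝ (Fin n)) 1)
      ≤ ∑ x ∈ hbfin.toFinset, μH[(n:ℝ)-1] (Metric.sphere (0 : EuclideanSpace ℝ (Fin n)) 1 ∩
          Metric.closedBall x (1/2)) :=
        le_trans (measure_mono hsub2) (measure_biUnion_finset_le _ _)
    _ < ∞ := by
        apply ENNReal.sum_lt_top.mpr
        intro x hx
        have hxs : ‖x‖ = 1 := by
          have := hbsub (hbfin.mem_toFinset.mp hx)
          rwa [mem_sphere_zero_iff_norm] at this
        refine lt_of_le_of_lt (smallcap hn x hxs (by norm_num) (by norm_num)) ?_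
        have h1 : (2:ℝ≥0∞) ^ ((n:ℝ)-1) < ∞ := by
          apply ENNReal.rpow_lt_top_of_nonneg
          · have : (1:ℝ) ≤ (n:ℝ) := by exact_mod_cast hn
            linarith
          · norm_num
        have h2 : ENNReal.ofReal (1/2) ^ ((n:ℝ)-1) < ∞ := by
          apply ENNReal.rpow_lt_top_of_nonneg
          · have : (1:ℝ) ≤ (n:ℝ) := by exact_mod_cast hn
            linarith
          · exact ENNReal.ofReal_ne_top
        exact ENNReal.mul_lt_top h1 (ENNReal.mul_lt_top h2 (VB_lt_top _))

lemma capbound {n : ℕ} (hn : 1 ≤ n) : ∃ c : ℝ≥0∞, c ≠ ∞ ∧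
    ∀ (z : EuclideanSpace ℝ (Fin n)) (r : ℝ), 0 < r →
      μH[(n:ℝ)-1] (Metric.sphere (0 : EuclideanSpace ℝ (Fin n)) 1 ∩ Metric.closedBall z r)
        ≤ c * ENNReal.ofReal r ^ ((n:ℝ)-1) := by
  have hE0 : (0:ℝ) ≤ (n:ℝ)-1 := by
    have : (1:ℝ) ≤ (n:ℝ) := by exact_mod_cast hn
    linarith
  set M := μH[(n:ℝ)-1] (Metric.sphere (0 : EuclideanSpace ℝ (Fin n)) 1) with hM
  refine ⟨(2:ℝ≥0∞) ^ ((n:ℝ)-1) * (ENNReal.ofReal 2 ^ ((n:ℝ)-1) * VB (n-1))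
    + M * ENNReal.ofReal 4 ^ ((n:ℝ)-1), ?_, ?_⟩
  · apply ENNReal.add_ne_top.mpr
    constructor
    · exact (ENNReal.mul_lt_top (ENNReal.rpow_lt_top_of_nonneg hE0 (by norm_num))
        (ENNReal.mul_lt_top (ENNReal.rpow_lt_top_of_nonneg hE0 ENNReal.ofReal_ne_top)
          (VB_lt_top _))).ne
    · exact (ENNReal.mul_lt_top (sphere_fin hn)
        (ENNReal.rpow_lt_top_of_nonneg hE0 ENNReal.ofReal_ne_top)).ne
  intro z r hr
  rcases lt_or_ge r (1/4) with hr4 | hr4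
  · rcases Set.eq_empty_or_nonempty
      (Metric.sphere (0 : EuclideanSpace ℝ (Fin n)) 1 ∩ Metric.closedBall z r) with he | ⟨p, hp1, hp2⟩
    · rw [he, measure_empty]; exact zero_le
    · have hpn : ‖p‖ = 1 := mem_sphere_zero_iff_norm.mp hp1
      have hsub : Metric.sphere (0 : EuclideanSpace ℝ (Fin n)) 1 ∩ Metric.closedBall z r ⊆
          Metric.sphere (0 : EuclideanSpace ℝ (Fin n)) 1 ∩ Metric.closedBall p (2*r) := by
        rintro x ⟨hx1, hx2⟩
        refine ⟨hx1, ?_⟩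
        rw [Metric.mem_closedBall] at hx2 hp2 ⊢
        calc dist x p ≤ dist x z + dist z p := dist_triangle x z p
          _ ≤ r + r := add_le_add hx2 (by rwa [dist_comm])
          _ = 2*r := by ring
      refine le_trans (measure_mono hsub) ?_
      refine le_trans (smallcap hn p hpn (by linarith) (by linarith)) ?_
      have h2r : ENNReal.ofReal (2*r) ^ ((n:ℝ)-1)
          = ENNReal.ofReal 2 ^ ((n:ℝ)-1) * ENNReal.ofReal r ^ ((n:ℝ)-1) := by
        rw [ENNReal.ofReal_mul (by norm_num), ENNReal.mul_rpow_of_nonneg _ _ hE0]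
      rw [h2r]
      calc (2:ℝ≥0∞) ^ ((n:ℝ)-1) *
            (ENNReal.ofReal 2 ^ ((n:ℝ)-1) * ENNReal.ofReal r ^ ((n:ℝ)-1) * VB (n-1))
          = ((2:ℝ≥0∞) ^ ((n:ℝ)-1) * (ENNReal.ofReal 2 ^ ((n:ℝ)-1) * VB (n-1)))
            * ENNReal.ofReal r ^ ((n:ℝ)-1) := by ring
        _ ≤ _ := mul_le_mul_left le_self_add _
  · have hbig : (1:ℝ≥0∞) ≤ ENNReal.ofReal 4 ^ ((n:ℝ)-1) * ENNReal.ofReal r ^ ((n:ℝ)-1) := by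
      rw [← ENNReal.mul_rpow_of_nonneg _ _ hE0, ← ENNReal.ofReal_mul (by norm_num)]
      have h4r : (1:ℝ) ≤ 4*r := by linarith
      calc (1:ℝ≥0∞) = ENNReal.ofReal 1 ^ ((n:ℝ)-1) := by simp
        _ ≤ ENNReal.ofReal (4*r) ^ ((n:ℝ)-1) :=
          ENNReal.rpow_le_rpow (ENNReal.ofReal_le_ofReal h4r) hE0
    calc μH[(n:ℝ)-1] (Metric.sphere (0 : EuclideanSpace ℝ (Fin n)) 1 ∩ Metric.closedBall z r)
        ≤ M := measure_mono inter_subset_left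
      _ ≤ M * (ENNReal.ofReal 4 ^ ((n:ℝ)-1) * ENNReal.ofReal r ^ ((n:ℝ)-1)) :=
          le_mul_of_one_le_right zero_le hbig
      _ = M * ENNReal.ofReal 4 ^ ((n:ℝ)-1) * ENNReal.ofReal r ^ ((n:ℝ)-1) := by ring
      _ ≤ _ := mul_le_mul_left le_add_self _

lemma term_id (dE K d : ℝ) (hd : 0 < d) (j : ℕ) :
    ((2:ℝ)^j * d)^(-K) * ((2:ℝ)^(j+1) * d)^dE
      = ((2:ℝ)^dE * d^(dE-K)) * ((2:ℝ)^(dE-K))^j := by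
  have h2 : (0:ℝ) < 2 := by norm_num
  rw [Real.mul_rpow (by positivity) hd.le, Real.mul_rpow (by positivity) hd.le]
  rw [← Real.rpow_natCast (2:ℝ) j, ← Real.rpow_natCast (2:ℝ) (j+1),
    ← Real.rpow_natCast ((2:ℝ)^(dE-K)) j,
    ← Real.rpow_mul h2.le, ← Real.rpow_mul h2.le, ← Real.rpow_mul h2.le]
  rw [show ((2:ℝ)^((j:ℝ)*(-K)) * d^(-K)) * ((2:ℝ)^((↑(j+1):ℝ)*dE) * d^dE)
      = ((2:ℝ)^((j:ℝ)*(-K)) * (2:ℝ)^((↑(j+1):ℝ)*dE)) * (d^(-K) * d^dE) by ring]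
  rw [← Real.rpow_add h2, ← Real.rpow_add hd]
  rw [show (2:ℝ)^dE * d^(dE-K) * (2:ℝ)^((dE-K)*(j:ℝ))
      = ((2:ℝ)^dE * (2:ℝ)^((dE-K)*(j:ℝ))) * d^(dE-K) by ring, ← Real.rpow_add h2]
  push_cast
  ring_nf

theorem stmt15 (n : ℕ) (hn : 2 ≤ n) (γ K : ℝ) (hγ : 0 ≤ γ) (hK : γ + (n : ℝ) - 1 < K) :
    ∃ C : ℝ, 0 < C ∧ ∀ y : EuclideanSpace ℝ (Fin n), ‖y‖ < 1 →
      ∫ x' in Metric.sphere (0 : EuclideanSpace ℝ (Fin n)) 1, ‖x' - y‖ ^ (-K) ∂μH[(n : ℝ) - 1]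
        ≤ C * (1 - ‖y‖) ^ (-K + (n : ℝ) - 1) := by
  have hn1 : 1 ≤ n := le_trans one_le_two hn
  have hn2 : (2:ℝ) ≤ (n:ℝ) := by exact_mod_cast hn
  obtain ⟨c, hc, hcap⟩ := capbound hn1
  set dE : ℝ := (n:ℝ) - 1 with hdE
  have hE0 : (0:ℝ) ≤ dE := by rw [hdE]; linarith
  have hEK : dE < K := by rw [hdE]; linarith
  have hKpos : 0 < K := by linarith
  set q : ℝ≥0∞ := ENNReal.ofReal ((2:ℝ) ^ (dE - K)) with hq
  have hq1 : q < 1 := by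
    rw [hq, ← ENNReal.ofReal_one]
    exact ENNReal.ofReal_lt_ofReal_iff_of_nonneg (by positivity) |>.mpr
      (Real.rpow_lt_one_of_one_lt_of_neg one_lt_two (by linarith))
  set S : ℝ≥0∞ := (1 - q)⁻¹ with hS
  have hStop : S ≠ ∞ := by
    rw [hS, Ne, ENNReal.inv_eq_top, tsub_eq_zero_iff_le]
    exact fun h => absurd hq1 (not_lt.mpr h)
  set c' : ℝ≥0∞ := c * ENNReal.ofReal ((2:ℝ)^dE) * S with hc'def
  have hc'top : c' ≠ ∞ := by
    rw [hc'def]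
    exact ENNReal.mul_ne_top (ENNReal.mul_ne_top hc ENNReal.ofReal_ne_top) hStop
  set C : ℝ := max 1 c'.toReal with hC
  refine ⟨C, lt_of_lt_of_le one_pos (le_max_left _ _), ?_⟩
  intro y hy
  set d : ℝ := 1 - ‖y‖ with hd
  have hd0 : 0 < d := by rw [hd]; linarith
  have hexp : -K + (n:ℝ) - 1 = dE - K := by rw [hdE]; ring
  rw [hexp]
  have hfm : AEStronglyMeasurable (fun x' : EuclideanSpace ℝ (Fin n) => ‖x' - y‖ ^ (-K))
      (μH[dE].restrict (Metric.sphere (0 : EuclideanSpace ℝ (Fin n)) 1)) := by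
    refine ContinuousOn.aestronglyMeasurable (fun x hx => ?_) isClosed_sphere.measurableSet
    have hxn : ‖x‖ = 1 := mem_sphere_zero_iff_norm.mp hx
    have hge := norm_sub_norm_le x y
    rw [hxn] at hge
    have hne : ‖x - y‖ ≠ 0 := ne_of_gt (by linarith)
    exact (((continuous_sub_right y).norm.continuousAt).rpow_const (Or.inl hne)).continuousWithinAt
  rw [integral_eq_lintegral_of_nonneg_ae
    (Filter.Eventually.of_forall fun x => Real.rpow_nonneg (norm_nonneg _) _)
    hfm]
  apply ENNReal.toReal_le_of_le_ofReal
    (mul_nonneg (le_trans zero_le_one (le_max_left _ _)) (Real.rpow_nonneg hd0.le _))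
  -- pointwise bound by a dyadic sum
  have key : ∀ x' ∈ Metric.sphere (0 : EuclideanSpace ℝ (Fin n)) 1,
      ENNReal.ofReal (‖x' - y‖ ^ (-K)) ≤
      ∑' j : ℕ, (Metric.closedBall y ((2:ℝ)^(j+1) * d)).indicator
        (fun _ => ENNReal.ofReal (((2:ℝ)^j * d) ^ (-K))) x' := by
    intro x' hx'
    have hxn : ‖x'‖ = 1 := mem_sphere_zero_iff_norm.mp hx'
    have hxd : d ≤ ‖x' - y‖ := by
      have := norm_sub_norm_le x' y
      rw [hxn] at this
      rw [hd]; linarith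
    obtain ⟨j, hj1, hj2⟩ := exists_nat_pow_near
      ((one_le_div hd0).mpr hxd) (one_lt_two (α := ℝ))
    have h1 : (2:ℝ)^j * d ≤ ‖x' - y‖ := by
      rw [← le_div_iff₀ hd0]; exact hj1
    have h2 : ‖x' - y‖ ≤ (2:ℝ)^(j+1) * d := by
      rw [← div_le_iff₀ hd0]; exact hj2.le
    refine le_trans ?_ (ENNReal.le_tsum j)
    rw [Set.indicator_of_mem (by rw [Metric.mem_closedBall, dist_eq_norm]; exact h2)]
    exact ENNReal.ofReal_le_ofReal
      (Real.rpow_le_rpow_of_nonpos (by positivity) h1 (by linarith))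
  calc (∫⁻ x' in Metric.sphere (0 : EuclideanSpace ℝ (Fin n)) 1,
        ENNReal.ofReal (‖x' - y‖ ^ (-K)) ∂μH[dE])
      ≤ ∫⁻ x' in Metric.sphere (0 : EuclideanSpace ℝ (Fin n)) 1,
        (∑' j : ℕ, (Metric.closedBall y ((2:ℝ)^(j+1) * d)).indicator
          (fun _ => ENNReal.ofReal (((2:ℝ)^j * d) ^ (-K))) x') ∂μH[dE] := by
        apply lintegral_mono_ae
        filter_upwards [ae_restrict_mem isClosed_sphere.measurableSet] with x' hx'
        exact key x' hx'
    _ = ∑' j : ℕ, ∫⁻ x' in Metric.sphere (0 : EuclideanSpace ℝ (Fin n)) 1,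
        (Metric.closedBall y ((2:ℝ)^(j+1) * d)).indicator
          (fun _ => ENNReal.ofReal (((2:ℝ)^j * d) ^ (-K))) x' ∂μH[dE] :=
        lintegral_tsum fun j =>
          (measurable_const.indicator measurableSet_closedBall).aemeasurable
    _ ≤ ∑' j : ℕ, ENNReal.ofReal (((2:ℝ)^j * d) ^ (-K)) *
          (c * ENNReal.ofReal ((2:ℝ)^(j+1) * d) ^ dE) := by
        apply ENNReal.tsum_le_tsum
        intro j
        rw [lintegral_indicator measurableSet_closedBall, setLIntegral_const,
          Measure.restrict_apply measurableSet_closedBall, Set.inter_comm]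
        exact mul_le_mul_right (hcap y _ (by positivity)) _
    _ = (c * ENNReal.ofReal ((2:ℝ)^dE)) * ENNReal.ofReal (d^(dE-K)) * ∑' j : ℕ, q ^ j := by
        rw [← ENNReal.tsum_mul_left]
        congr 1
        funext j
        rw [ENNReal.ofReal_rpow_of_pos (by positivity)]
        rw [show ENNReal.ofReal (((2:ℝ)^j*d)^(-K)) * (c * ENNReal.ofReal (((2:ℝ)^(j+1)*d)^dE))
            = c * (ENNReal.ofReal (((2:ℝ)^j*d)^(-K)) * ENNReal.ofReal (((2:ℝ)^(j+1)*d)^dE))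
          from by ring]
        rw [← ENNReal.ofReal_mul (by positivity), term_id dE K d hd0 j,
          ENNReal.ofReal_mul (by positivity), ENNReal.ofReal_mul (by positivity),
          ENNReal.ofReal_pow (by positivity)]
        ring
    _ = c' * ENNReal.ofReal (d^(dE-K)) := by
        rw [ENNReal.tsum_geometric, hc'def, hS]
        ring
    _ ≤ ENNReal.ofReal (C * d^(dE-K)) := by
        rw [ENNReal.ofReal_mul (le_trans zero_le_one (le_max_left _ _))]
        refine mul_le_mul_left ?_ _
        calc c' = ENNReal.ofReal c'.toReal := (ENNReal.ofReal_toReal hc'top).symm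
          _ ≤ ENNReal.ofReal C := ENNReal.ofReal_le_ofReal (le_max_right _ _)
end
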